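/- arXiv:1612.03873 — 4 statements merged into one kernel-verified Lean document; each statement's English description precedes it below -/
import Mathlib

section
/- For every directed graph G with n labeled vertices and k labeled edges, the sum of α(H) over all 2^k subgraphs H of G equals (−1)^k · σ(G). -/
open Finset

open scoped Classical Nat

noncomputable section

/-- A directed graph with `n` labeled vertices and `k` labeled edges:
the `ℓ`-th edge is the ordered pair `G ℓ = (a, b)` (an edge from `a` to `b`; loops allowed). -/
abbrev DG (n k : ℕ) := Fin k → Fin n × Fin n

namespace DG

variable {n k : ℕ}

/-- `step G S a b`: the subgraph of `G` with edge-label set `S` has an edge from `a` to `b`. -/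
def step (G : DG n k) (S : Finset (Fin k)) (a b : Fin n) : Prop :=
  ∃ e ∈ S, G e = (a, b)

/-- The subgraph of `G` with edge-label set `S` contains no directed cycle. -/
def Acyclic (G : DG n k) (S : Finset (Fin k)) : Prop :=
  ∀ a : Fin n, ¬ Relation.TransGen (step G S) a a

/-- The edge `e` lies on a directed cycle of the subgraph of `G` with edge set `S`
(equivalently, there is a directed path from the head of `e` back to its tail). -/
def OnCycle (G : DG n k) (S : Finset (Fin k)) (e : Fin k) : Prop :=
  Relation.ReflTransGen (step G S) (G e).2 (G e).1

/-- Strongly semiconnected: every edge lies on a directed cycle. -/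
def SSC (G : DG n k) (S : Finset (Fin k)) : Prop :=
  ∀ e ∈ S, OnCycle G S e

/-- Strongly connected: every ordered pair of vertices is joined by a directed path. -/
def StronglyConnected (G : DG n k) (S : Finset (Fin k)) : Prop :=
  ∀ a b : Fin n, Relation.ReflTransGen (step G S) a b

/-- Adjacency in the underlying undirected graph. -/
def adj (G : DG n k) (S : Finset (Fin k)) (a b : Fin n) : Prop :=
  ∃ e ∈ S, G e = (a, b) ∨ G e = (b, a)

/-- `β₀`: the number of connected components of the underlying undirected graph
(isolated vertices count as components). -/
def beta0 (G : DG n k) (S : Finset (Fin k)) : ℕ :=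
  Nat.card (Quot (adj G S))

/-- `α(H) = (−1)^{#edges}` if `H` is acyclic, `0` otherwise. -/
def alpha (G : DG n k) (S : Finset (Fin k)) : ℤ :=
  if Acyclic G S then (-1) ^ S.card else 0

/-- `σ(H) = (−1)^{β₁}` if `H` is strongly semiconnected, `0` otherwise;
here `β₁ = #edges − n + β₀`, and `(−1)^{#edges − n + β₀} = (−1)^{#edges + n + β₀}`. -/
def sigma (G : DG n k) (S : Finset (Fin k)) : ℤ :=
  if SSC G S then (-1) ^ (S.card + n + beta0 G S) else 0

/-- The vertex `v` is isolated: incident to no edge. -/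
def isolated (G : DG n k) (v : Fin n) : Prop :=
  ∀ e : Fin k, (G e).1 ≠ v ∧ (G e).2 ≠ v

/-- The vertex `v` is a sink: no edge starts at it. -/
def isSink (G : DG n k) (v : Fin n) : Prop :=
  ∀ e : Fin k, (G e).1 ≠ v

end DG

namespace Statement0

open Relation

variable {n k : ℕ}

lemma npow_parity {a b : ℕ} (h : a % 2 = b % 2) : (-1:ℤ)^a = (-1)^b := by
  conv_lhs => rw [← Nat.div_add_mod a 2]
  conv_rhs => rw [← Nat.div_add_mod b 2]
  rw [pow_add, pow_add, pow_mul, pow_mul]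
  norm_num [h]

/-- edges with both endpoints in `W` -/
def EW (G : DG n k) (W : Finset (Fin n)) : Finset (Fin k) :=
  Finset.univ.filter (fun e => (G e).1 ∈ W ∧ (G e).2 ∈ W)

lemma mem_EW {G : DG n k} {W : Finset (Fin n)} {e : Fin k} :
    e ∈ EW G W ↔ (G e).1 ∈ W ∧ (G e).2 ∈ W := by simp [EW]

lemma EW_mono {G : DG n k} {W W' : Finset (Fin n)} (h : W ⊆ W') : EW G W ⊆ EW G W' := by
  intro e he; rw [mem_EW] at he ⊢; exact ⟨h he.1, h he.2⟩

lemma step_mono {G : DG n k} {S S' : Finset (Fin k)} (h : S ⊆ S') {a b : Fin n}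
    (hs : DG.step G S a b) : DG.step G S' a b := by
  obtain ⟨e, he, heq⟩ := hs; exact ⟨e, h he, heq⟩

lemma EW_univ (G : DG n k) : EW G Finset.univ = Finset.univ := by
  ext e; simp [mem_EW]

def A (G : DG n k) (W : Finset (Fin n)) : ℤ := ∑ S ∈ (EW G W).powerset, DG.alpha G S

/-- reachability within `W` -/
def RW (G : DG n k) (W : Finset (Fin n)) : Fin n → Fin n → Prop :=
  Relation.ReflTransGen (DG.step G (EW G W))

def eqv (G : DG n k) (W : Finset (Fin n)) (x y : Fin n) : Prop := RW G W x y ∧ RW G W y x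

def SSCW (G : DG n k) (W : Finset (Fin n)) : Prop :=
  ∀ e ∈ EW G W, RW G W (G e).2 (G e).1

def cC (G : DG n k) (W : Finset (Fin n)) : ℕ := Nat.card (Quot (DG.adj G (EW G W)))

def F (G : DG n k) (W : Finset (Fin n)) : ℤ := if SSCW G W then (-1)^(n + cC G W) else 0

/-- generic quotient counting lemma -/
lemma card_quot_eq {α β : Type*} [Fintype α] [DecidableEq β] (r : α → α → Prop) (p : α → β)
    (h1 : ∀ a b, r a b → p a = p b) (h2 : ∀ a b, p a = p b → Relation.EqvGen r a b) :
    Nat.card (Quot r) = (Finset.image p Finset.univ).card := by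
  have e : Quot r ≃ {b // b ∈ Finset.image p Finset.univ} := by
    refine Equiv.ofBijective
      (Quot.lift (fun a => (⟨p a, Finset.mem_image_of_mem p (Finset.mem_univ a)⟩ :
        {b // b ∈ Finset.image p Finset.univ}))
        (fun a b hab => Subtype.ext (h1 a b hab))) ⟨?_, ?_⟩
    · intro x y
      induction x using Quot.ind with | _ a =>
      induction y using Quot.ind with | _ b =>
      intro hxy
      exact Quot.eqvGen_sound (h2 a b (congrArg Subtype.val hxy))
    · rintro ⟨b, hb⟩
      obtain ⟨a, _, rfl⟩ := Finset.mem_image.1 hb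
      exact ⟨Quot.mk r a, rfl⟩
  rw [Nat.card_congr e, Nat.card_eq_fintype_card, Fintype.card_coe]

lemma transGen_head {G : DG n k} {S : Finset (Fin k)} {x y : Fin n}
    (h : Relation.TransGen (DG.step G S) x y) : ∃ e ∈ S, (G e).2 = y := by
  induction h with
  | single hs => obtain ⟨e, he, heq⟩ := hs; exact ⟨e, he, by rw [heq]⟩
  | tail _ hs _ => obtain ⟨e, he, heq⟩ := hs; exact ⟨e, he, by rw [heq]⟩

lemma step_mem_W {G : DG n k} {W : Finset (Fin n)} {x y : Fin n}
    (h : DG.step G (EW G W) x y) : x ∈ W ∧ y ∈ W := by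
  obtain ⟨e, he, heq⟩ := h
  rw [mem_EW] at he
  rwa [heq] at he

lemma mem_W_of_RW {G : DG n k} {W : Finset (Fin n)} {x y : Fin n}
    (h : RW G W x y) (hx : x ∈ W) : y ∈ W := by
  induction h with
  | refl => exact hx
  | tail _ hs _ => exact (step_mem_W hs).2

theorem test_ok : True := trivial
/-- if every vertex of a nonempty `W` is the head of an edge of `S ⊆ EW G W`,
then there is a directed cycle -/
lemma exists_cycle_of_all_heads {G : DG n k} {W : Finset (Fin n)} {S : Finset (Fin k)}
    (hS : S ⊆ EW G W) (hW : W.Nonempty)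
    (h : ∀ w ∈ W, ∃ e ∈ S, (G e).2 = w) :
    ∃ a, Relation.TransGen (DG.step G S) a a := by
  have hprev : ∀ x : {x // x ∈ W}, ∃ y : {x // x ∈ W}, DG.step G S (↑y) (↑x) := by
    rintro ⟨x, hx⟩
    obtain ⟨e, he, heq⟩ := h x hx
    have h1 : (G e).1 ∈ W := (mem_EW.1 (hS he)).1
    exact ⟨⟨(G e).1, h1⟩, e, he, by simp [← heq]⟩
  choose prev hstep using hprev
  obtain ⟨w0, hw0⟩ := hW
  have key : ∀ (d : ℕ) (y : {x // x ∈ W}),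
      Relation.TransGen (DG.step G S) ↑(prev^[d+1] y) ↑y := by
    intro d
    induction d with
    | zero => intro y; simpa using Relation.TransGen.single (hstep y)
    | succ d ih =>
      intro y
      have : prev^[d+1+1] y = prev (prev^[d+1] y) := Function.iterate_succ_apply' _ _ _
      rw [this]
      exact ((ih y).head (hstep _))
  obtain ⟨i, j, hij, heqij⟩ := Finite.exists_ne_map_eq_of_infinite
    (fun i : ℕ => prev^[i] (⟨w0, hw0⟩ : {x // x ∈ W}))
  wlog hlt : i < j generalizing i j
  · exact this j i hij.symm heqij.symm (by omega)
  refine ⟨↑(prev^[i] (⟨w0, hw0⟩ : {x // x ∈ W})), ?_⟩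
  have hj : prev^[j] (⟨w0, hw0⟩ : {x // x ∈ W})
      = prev^[(j - i - 1) + 1] (prev^[i] ⟨w0, hw0⟩) := by
    rw [← Function.iterate_add_apply]
    congr 1
    omega
  have := key (j - i - 1) (prev^[i] (⟨w0, hw0⟩ : {x // x ∈ W}))
  rw [← hj, ← heqij] at this
  exact this

/-- an acyclic subgraph of a nonempty `W` has a vertex of `W` with no incoming edge -/
lemma srcset_nonempty {G : DG n k} {W : Finset (Fin n)} {S : Finset (Fin k)}
    (hS : S ⊆ EW G W) (hW : W.Nonempty) (hac : DG.Acyclic G S) :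
    ∃ w ∈ W, ∀ e ∈ S, (G e).2 ≠ w := by
  by_contra hcon
  push_neg at hcon
  obtain ⟨a, ha⟩ := exists_cycle_of_all_heads hS hW hcon
  exact hac a ha

lemma zap {G : DG n k} {S : Finset (Fin k)} {U : Finset (Fin n)}
    (hhead : ∀ e ∈ S, (G e).2 ∉ U) :
    ∀ {x y : Fin n}, Relation.TransGen (DG.step G S) x y → x ∉ U →
      Relation.TransGen (DG.step G (S.filter (fun e => (G e).1 ∉ U))) x y := by
  intro x y h
  induction h with
  | single hs =>
    intro hx
    obtain ⟨e, he, heq⟩ := hs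
    refine Relation.TransGen.single ⟨e, Finset.mem_filter.2 ⟨he, ?_⟩, heq⟩
    rw [heq]; exact hx
  | tail hxy hs ih =>
    intro hx
    have h' := ih hx
    obtain ⟨e', he', heq'⟩ := transGen_head h'
    have hynotU : (G e').2 ∉ U := hhead e' (Finset.filter_subset _ _ he')
    obtain ⟨e, he, heq⟩ := hs
    refine h'.tail ⟨e, Finset.mem_filter.2 ⟨he, ?_⟩, heq⟩
    rw [heq]
    rw [heq'] at hynotU
    exact hynotU

lemma acyclic_zap {G : DG n k} {S : Finset (Fin k)} {U : Finset (Fin n)}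
    (hhead : ∀ e ∈ S, (G e).2 ∉ U) :
    DG.Acyclic G S ↔ DG.Acyclic G (S.filter (fun e => (G e).1 ∉ U)) := by
  constructor
  · intro h a ha
    exact h a (Relation.TransGen.mono (fun x y => step_mono (Finset.filter_subset _ _)) _ _ ha)
  · intro h a ha
    obtain ⟨e, he, heq⟩ := transGen_head ha
    have : a ∉ U := heq ▸ hhead e he
    exact h a (zap hhead ha this)

lemma sum_powerset_union' {α : Type*} {M : Type*} [DecidableEq α] [AddCommMonoid M]
    {A B : Finset α} (h : Disjoint A B) (f : Finset α → M) :
    ∑ S ∈ (A ∪ B).powerset, f S = ∑ P ∈ A.powerset, ∑ Q ∈ B.powerset, f (P ∪ Q) := by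
  rw [← Finset.sum_product']
  refine (Finset.sum_nbij' (fun PQ => PQ.1 ∪ PQ.2) (fun S => (S ∩ A, S ∩ B)) ?_ ?_ ?_ ?_ ?_).symm
  · rintro ⟨P, Q⟩ hPQ
    rw [Finset.mem_product] at hPQ
    rw [Finset.mem_powerset]
    exact Finset.union_subset_union (Finset.mem_powerset.1 hPQ.1) (Finset.mem_powerset.1 hPQ.2)
  · intro S hS
    rw [Finset.mem_powerset] at hS
    rw [Finset.mem_product, Finset.mem_powerset, Finset.mem_powerset]
    exact ⟨Finset.inter_subset_right, Finset.inter_subset_right⟩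
  · rintro ⟨P, Q⟩ hPQ
    rw [Finset.mem_product, Finset.mem_powerset, Finset.mem_powerset] at hPQ
    obtain ⟨hP, hQ⟩ := hPQ
    have h1 : (P ∪ Q) ∩ A = P := by
      ext x
      simp only [Finset.mem_inter, Finset.mem_union]
      constructor
      · rintro ⟨hx | hx, hxA⟩
        · exact hx
        · exact absurd hxA (Finset.disjoint_right.1 h (hQ hx))
      · intro hx; exact ⟨Or.inl hx, hP hx⟩
    have h2 : (P ∪ Q) ∩ B = Q := by
      ext x
      simp only [Finset.mem_inter, Finset.mem_union]
      constructor
      · rintro ⟨hx | hx, hxB⟩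
        · exact absurd hxB (Finset.disjoint_left.1 h (hP hx))
        · exact hx
      · intro hx; exact ⟨Or.inr hx, hQ hx⟩
    simp [h1, h2]
  · intro S hS
    rw [Finset.mem_powerset] at hS
    simp only
    rw [← Finset.inter_union_distrib_left]
    exact Finset.inter_eq_left.2 hS
  · rintro ⟨P, Q⟩ _
    rfl

theorem test_ok2 : True := trivial
lemma alpha_union {G : DG n k} {U : Finset (Fin n)} {P Q : Finset (Fin k)}
    (hhead : ∀ e ∈ P ∪ Q, (G e).2 ∉ U)
    (hP : ∀ e ∈ P, (G e).1 ∈ U) (hQ : ∀ e ∈ Q, (G e).1 ∉ U) :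
    DG.alpha G (P ∪ Q) = (-1)^P.card * DG.alpha G Q := by
  have hdisj : Disjoint P Q := by
    rw [Finset.disjoint_left]; intro e heP heQ; exact hQ e heQ (hP e heP)
  have hfilter : (P ∪ Q).filter (fun e => (G e).1 ∉ U) = Q := by
    ext e; simp only [Finset.mem_filter, Finset.mem_union]
    constructor
    · rintro ⟨hPQ | hQ', hn⟩
      · exact absurd (hP e hPQ) hn
      · exact hQ'
    · intro he; exact ⟨Or.inr he, hQ e he⟩
  have hiff := acyclic_zap (G := G) hhead
  rw [hfilter] at hiff
  rw [DG.alpha, DG.alpha]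
  by_cases hac : DG.Acyclic G Q
  · rw [if_pos (hiff.2 hac), if_pos hac, Finset.card_union_of_disjoint hdisj, pow_add]
  · rw [if_neg (fun h => hac (hiff.1 h)), if_neg hac, mul_zero]

lemma inner_eq {G : DG n k} {W U : Finset (Fin n)} (hUW : U ⊆ W) :
    ∑ S ∈ ((EW G W).filter (fun e => (G e).2 ∉ U)).powerset, DG.alpha G S =
      if (∀ e : Fin k, (G e).1 ∈ U → (G e).2 ∈ W → (G e).2 ∈ U) then A G (W \ U) else 0 := by
  set E0 := (EW G W).filter (fun e => (G e).2 ∉ U) with hE0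
  set Ef := E0.filter (fun e => (G e).1 ∈ U) with hEf
  set Er := E0.filter (fun e => ¬ (G e).1 ∈ U) with hEr
  have hsplit : Ef ∪ Er = E0 := Finset.filter_union_filter_not_eq _ _
  have hdisj : Disjoint Ef Er := Finset.disjoint_filter_filter_not _ _ _
  have hErW : Er = EW G (W \ U) := by
    ext e
    simp only [hEr, hE0, Finset.mem_filter, mem_EW, Finset.mem_sdiff]
    tauto
  have hcond : (Ef = ∅) ↔ (∀ e : Fin k, (G e).1 ∈ U → (G e).2 ∈ W → (G e).2 ∈ U) := by
    rw [Finset.eq_empty_iff_forall_notMem]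
    constructor
    · intro h e h1 h2
      by_contra h3
      refine h e ?_
      simp only [hEf, hE0, Finset.mem_filter, mem_EW]
      exact ⟨⟨⟨hUW h1, h2⟩, h3⟩, h1⟩
    · intro h e he
      simp only [hEf, hE0, Finset.mem_filter, mem_EW] at he
      exact he.1.2 (h e he.2 he.1.1.2)
  rw [← hsplit, sum_powerset_union' hdisj]
  have hstep : ∀ P ∈ Ef.powerset, ∑ Q ∈ Er.powerset, DG.alpha G (P ∪ Q)
      = (-1)^P.card * ∑ Q ∈ Er.powerset, DG.alpha G Q := by
    intro P hP
    rw [Finset.mem_powerset] at hP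
    rw [Finset.mul_sum]
    refine Finset.sum_congr rfl (fun Q hQ => ?_)
    rw [Finset.mem_powerset] at hQ
    refine alpha_union (U := U) ?_ ?_ ?_
    · intro e he
      rcases Finset.mem_union.1 he with h' | h'
      · exact (Finset.mem_filter.1 (Finset.filter_subset _ _ (hP h'))).2
      · exact (Finset.mem_filter.1 (Finset.filter_subset _ _ (hQ h'))).2
    · intro e he; exact (Finset.mem_filter.1 (hP he)).2
    · intro e he; exact (Finset.mem_filter.1 (hQ he)).2
  rw [Finset.sum_congr rfl hstep, ← Finset.sum_mul, sum_powerset_neg_one_pow_card, hErW]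
  by_cases hc : Ef = ∅
  · rw [if_pos hc, if_pos (hcond.1 hc), one_mul, A]
  · rw [if_neg hc, if_neg (fun h => hc (hcond.2 h)), zero_mul]

lemma A_rec (G : DG n k) {W : Finset (Fin n)} (hW : W.Nonempty) :
    A G W = ∑ U ∈ W.powerset.erase ∅, (-1:ℤ)^(U.card+1) *
      (if (∀ e : Fin k, (G e).1 ∈ U → (G e).2 ∈ W → (G e).2 ∈ U) then A G (W \ U) else 0) := by
  have step1 : ∀ U ∈ W.powerset.erase ∅,
      (-1:ℤ)^(U.card+1) *
        (if (∀ e : Fin k, (G e).1 ∈ U → (G e).2 ∈ W → (G e).2 ∈ U) then A G (W \ U) else 0)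
      = ∑ S ∈ (EW G W).powerset,
          (-1:ℤ)^(U.card+1) * (if (∀ e ∈ S, (G e).2 ∉ U) then DG.alpha G S else 0) := by
    intro U hU
    have hUW : U ⊆ W := Finset.mem_powerset.1 (Finset.mem_of_mem_erase hU)
    rw [← inner_eq hUW, ← Finset.mul_sum]
    congr 1
    calc ∑ S ∈ ((EW G W).filter (fun e => (G e).2 ∉ U)).powerset, DG.alpha G S
        = ∑ S ∈ ((EW G W).filter (fun e => (G e).2 ∉ U)).powerset,
            (if (∀ e ∈ S, (G e).2 ∉ U) then DG.alpha G S else 0) := by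
          refine Finset.sum_congr rfl (fun S hS => ?_)
          rw [if_pos (fun e he =>
            (Finset.mem_filter.1 (Finset.mem_powerset.1 hS he)).2)]
      _ = ∑ S ∈ (EW G W).powerset,
            (if (∀ e ∈ S, (G e).2 ∉ U) then DG.alpha G S else 0) := by
          refine Finset.sum_subset (Finset.powerset_mono.2 (Finset.filter_subset _ _)) ?_
          intro S hS hSn
          rw [if_neg]
          intro hcondS
          exact hSn (Finset.mem_powerset.2 (fun e he =>
            Finset.mem_filter.2 ⟨Finset.mem_powerset.1 hS he, hcondS e he⟩))
  rw [Finset.sum_congr rfl step1, Finset.sum_comm]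
  rw [A]
  refine Finset.sum_congr rfl (fun S hS => ?_)
  rw [Finset.mem_powerset] at hS
  by_cases hac : DG.Acyclic G S
  · set M := W.filter (fun w => ∀ e ∈ S, (G e).2 ≠ w) with hM
    have hMne : M.Nonempty := by
      obtain ⟨w, hw, hwp⟩ := srcset_nonempty hS hW hac
      exact ⟨w, Finset.mem_filter.2 ⟨hw, hwp⟩⟩
    have hMsub : M ⊆ W := Finset.filter_subset _ _
    have key : ∀ U ∈ W.powerset.erase ∅,
        (-1:ℤ)^(U.card+1) * (if (∀ e ∈ S, (G e).2 ∉ U) then DG.alpha G S else 0)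
        = (if U ⊆ M then (-1:ℤ)^(U.card+1) * DG.alpha G S else 0) := by
      intro U hU
      have hUW : U ⊆ W := Finset.mem_powerset.1 (Finset.mem_of_mem_erase hU)
      by_cases hcnd : ∀ e ∈ S, (G e).2 ∉ U
      · rw [if_pos hcnd, if_pos]
        intro u hu
        refine Finset.mem_filter.2 ⟨hUW hu, fun e he heq => hcnd e he (heq ▸ hu)⟩
      · rw [if_neg hcnd, if_neg, mul_zero]
        intro hsub
        refine hcnd (fun e he hin => ?_)
        exact (Finset.mem_filter.1 (hsub hin)).2 e he rfl
    rw [Finset.sum_congr rfl key, ← Finset.sum_filter]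
    have hfe : (W.powerset.erase ∅).filter (fun U => U ⊆ M) = M.powerset.erase ∅ := by
      ext U
      simp only [Finset.mem_filter, Finset.mem_erase, Finset.mem_powerset]
      constructor
      · rintro ⟨⟨h1, _⟩, h3⟩; exact ⟨h1, h3⟩
      · rintro ⟨h1, h2⟩; exact ⟨⟨h1, h2.trans hMsub⟩, h2⟩
    rw [hfe, ← Finset.sum_mul]
    have : ∑ U ∈ M.powerset.erase ∅, (-1:ℤ)^(U.card+1) = 1 := by
      have h1 : ((-1:ℤ)^((∅ : Finset (Fin n)).card+1))
          + ∑ U ∈ M.powerset.erase ∅, (-1:ℤ)^(U.card+1)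
          = ∑ U ∈ M.powerset, (-1:ℤ)^(U.card+1) :=
        Finset.add_sum_erase _ (fun U => (-1:ℤ)^(U.card+1)) (Finset.empty_mem_powerset M)
      have h2 : ∑ U ∈ M.powerset, (-1:ℤ)^(U.card+1) = 0 := by
        have := sum_powerset_neg_one_pow_card_of_nonempty hMne
        calc ∑ U ∈ M.powerset, (-1:ℤ)^(U.card+1)
            = ∑ U ∈ M.powerset, (-1:ℤ)^(U.card) * (-1) := by
              refine Finset.sum_congr rfl (fun U _ => ?_); rw [pow_succ]
          _ = 0 := by rw [← Finset.sum_mul, this, zero_mul]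
      simp only [Finset.card_empty, pow_one] at h1
      omega
    rw [this, one_mul]
  · have : DG.alpha G S = 0 := by rw [DG.alpha, if_neg hac]
    rw [this]
    simp
lemma eqv_refl (G : DG n k) (W : Finset (Fin n)) (x : Fin n) : eqv G W x x :=
  ⟨ReflTransGen.refl, ReflTransGen.refl⟩

lemma eqv_symm {G : DG n k} {W : Finset (Fin n)} {x y : Fin n} (h : eqv G W x y) :
    eqv G W y x := ⟨h.2, h.1⟩

lemma eqv_trans {G : DG n k} {W : Finset (Fin n)} {x y z : Fin n} (h : eqv G W x y)
    (h' : eqv G W y z) : eqv G W x z := ⟨h.1.trans h'.1, h'.2.trans h.2⟩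

lemma mem_W_of_eqv {G : DG n k} {W : Finset (Fin n)} {x y : Fin n} (h : eqv G W x y)
    (hx : x ∈ W) : y ∈ W := mem_W_of_RW h.1 hx

def CompF (G : DG n k) (W : Finset (Fin n)) (x : Fin n) : Finset (Fin n) :=
  W.filter (fun y => eqv G W x y)

lemma mem_CompF {G : DG n k} {W : Finset (Fin n)} {x z : Fin n} :
    z ∈ CompF G W x ↔ z ∈ W ∧ eqv G W x z := Finset.mem_filter

lemma CompF_subset {G : DG n k} {W : Finset (Fin n)} {x : Fin n} : CompF G W x ⊆ W :=
  Finset.filter_subset _ _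

lemma self_mem_CompF {G : DG n k} {W : Finset (Fin n)} {x : Fin n} (hx : x ∈ W) :
    x ∈ CompF G W x := mem_CompF.2 ⟨hx, eqv_refl G W x⟩

lemma CompF_congr {G : DG n k} {W : Finset (Fin n)} {x y : Fin n} (h : eqv G W x y) :
    CompF G W x = CompF G W y := by
  ext z
  simp only [mem_CompF]
  exact ⟨fun ⟨hz, he⟩ => ⟨hz, eqv_trans (eqv_symm h) he⟩, fun ⟨hz, he⟩ => ⟨hz, eqv_trans h he⟩⟩

def srcv (G : DG n k) (W : Finset (Fin n)) (x : Fin n) : Prop :=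
  ∀ e ∈ EW G W, (G e).2 = x → RW G W x (G e).1

def srcAll (G : DG n k) (W : Finset (Fin n)) (x : Fin n) : Prop :=
  ∀ y, eqv G W x y → srcv G W y

lemma srcAll_congr {G : DG n k} {W : Finset (Fin n)} {x y : Fin n} (h : eqv G W x y)
    (hx : srcAll G W x) : srcAll G W y := fun z hz => hx z (eqv_trans h hz)

def SrcComps (G : DG n k) (W : Finset (Fin n)) : Finset (Finset (Fin n)) :=
  (W.filter (srcAll G W)).image (CompF G W)

lemma mem_SrcComps_elems {G : DG n k} {W : Finset (Fin n)} {t : Finset (Fin n)}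
    (ht : t ∈ SrcComps G W) {z : Fin n} (hz : z ∈ t) :
    z ∈ W ∧ srcAll G W z ∧ CompF G W z = t := by
  obtain ⟨w, hw, rfl⟩ := Finset.mem_image.1 ht
  rw [Finset.mem_filter] at hw
  rw [mem_CompF] at hz
  exact ⟨hz.1, srcAll_congr hz.2 hw.2, (CompF_congr hz.2).symm⟩

lemma biUnion_subset_W {G : DG n k} {W : Finset (Fin n)} {T : Finset (Finset (Fin n))}
    (hT : T ⊆ SrcComps G W) : T.biUnion id ⊆ W := by
  intro z hz
  obtain ⟨t, ht, hzt⟩ := Finset.mem_biUnion.1 hz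
  exact (mem_SrcComps_elems (hT ht) hzt).1

lemma mem_biUnion_facts {G : DG n k} {W : Finset (Fin n)} {T : Finset (Finset (Fin n))}
    (hT : T ⊆ SrcComps G W) {z : Fin n} (hz : z ∈ T.biUnion id) :
    z ∈ W ∧ srcAll G W z ∧ CompF G W z ∈ T ∧ CompF G W z ⊆ T.biUnion id := by
  obtain ⟨t, ht, hzt⟩ := Finset.mem_biUnion.1 hz
  obtain ⟨h1, h2, h3⟩ := mem_SrcComps_elems (hT ht) hzt
  refine ⟨h1, h2, h3 ▸ ht, ?_⟩
  intro y hy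
  exact Finset.mem_biUnion.2 ⟨t, ht, h3 ▸ hy⟩

lemma image_CompF_biUnion {G : DG n k} {W : Finset (Fin n)} {T : Finset (Finset (Fin n))}
    (hT : T ⊆ SrcComps G W) : (T.biUnion id).image (CompF G W) = T := by
  ext t
  constructor
  · intro ht
    obtain ⟨z, hz, rfl⟩ := Finset.mem_image.1 ht
    exact (mem_biUnion_facts hT hz).2.2.1
  · intro ht
    obtain ⟨w, hw, rfl⟩ := Finset.mem_image.1 (hT ht)
    rw [Finset.mem_filter] at hw
    refine Finset.mem_image.2 ⟨w, Finset.mem_biUnion.2 ⟨_, ht, self_mem_CompF hw.1⟩, rfl⟩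

/-- paths between mutually reachable vertices stay inside the strong component -/
lemma confine {G : DG n k} {W : Finset (Fin n)} {x0 : Fin n} :
    ∀ {x y : Fin n}, RW G W x y → RW G W y x0 → RW G W x0 x →
      Relation.ReflTransGen (DG.step G (EW G (CompF G W x0))) x y := by
  intro x y h
  induction h using Relation.ReflTransGen.head_induction_on with
  | refl => intro _ _; exact ReflTransGen.refl
  | head hstep hrest ih =>
    intro h1 h2
    rename_i a c
    obtain ⟨e, he, heq⟩ := hstep
    have haW : a ∈ W := (step_mem_W ⟨e, he, heq⟩).1
    have hcW : c ∈ W := (step_mem_W ⟨e, he, heq⟩).2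
    have hx0c : RW G W x0 c := h2.trans (ReflTransGen.single ⟨e, he, heq⟩)
    have hcx0 : RW G W c x0 := hrest.trans h1
    have hax0 : eqv G W x0 a := ⟨h2, (ReflTransGen.single ⟨e, he, heq⟩).trans hcx0⟩
    have hacomp : a ∈ CompF G W x0 := mem_CompF.2 ⟨haW, hax0⟩
    have hccomp : c ∈ CompF G W x0 := mem_CompF.2 ⟨hcW, ⟨hx0c, hcx0⟩⟩
    refine ReflTransGen.head ⟨e, mem_EW.2 ⟨heq ▸ hacomp, heq ▸ hccomp⟩, heq⟩ (ih h1 hx0c)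

lemma rtg_to_eqvgen {G : DG n k} {S : Finset (Fin k)} {a b : Fin n}
    (h : Relation.ReflTransGen (DG.step G S) a b) : Relation.EqvGen (DG.adj G S) a b := by
  induction h with
  | refl => exact EqvGen.refl a
  | tail _ hs ih =>
    obtain ⟨e, he, heq⟩ := hs
    exact ih.trans _ _ _ (EqvGen.rel _ _ ⟨e, he, Or.inl heq⟩)

/-- counting components of a union of source components -/
lemma comp_count {G : DG n k} {W : Finset (Fin n)} {T : Finset (Finset (Fin n))}
    (hT : T ⊆ SrcComps G W) :
    Nat.card (Quot (DG.adj G (EW G (T.biUnion id)))) = (n - (T.biUnion id).card) + T.card := by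
  set Z := T.biUnion id with hZ
  have hZW : Z ⊆ W := biUnion_subset_W hT
  set p : Fin n → Sum (Fin n) (Finset (Fin n)) :=
    fun x => if x ∈ Z then Sum.inr (CompF G W x) else Sum.inl x with hp
  have heqvZ : ∀ a b : Fin n, a ∈ Z → b ∈ Z → DG.step G (EW G Z) a b → eqv G W a b := by
    intro a b haZ hbZ hs
    obtain ⟨e, he, heq⟩ := hs
    have heW : e ∈ EW G W := EW_mono hZW he
    have hsrc : srcv G W b := (mem_biUnion_facts hT hbZ).2.1 b (eqv_refl G W b)
    have hba : RW G W b a := by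
      have := hsrc e heW (by rw [heq])
      rwa [heq] at this
    exact ⟨ReflTransGen.single ⟨e, heW, heq⟩, hba⟩
  have h1 : ∀ a b, DG.adj G (EW G Z) a b → p a = p b := by
    intro a b hab
    obtain ⟨e, he, heq⟩ := hab
    have hends : (G e).1 ∈ Z ∧ (G e).2 ∈ Z := mem_EW.1 he
    rcases heq with heq | heq
    · have haZ : a ∈ Z := by rw [heq] at hends; exact hends.1
      have hbZ : b ∈ Z := by rw [heq] at hends; exact hends.2
      have : eqv G W a b := heqvZ a b haZ hbZ ⟨e, he, heq⟩
      simp only [hp, if_pos haZ, if_pos hbZ, CompF_congr this]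
    · have hbZ : b ∈ Z := by rw [heq] at hends; exact hends.1
      have haZ : a ∈ Z := by rw [heq] at hends; exact hends.2
      have : eqv G W b a := heqvZ b a hbZ haZ ⟨e, he, heq⟩
      simp only [hp, if_pos haZ, if_pos hbZ, CompF_congr this]
  have h2 : ∀ a b, p a = p b → Relation.EqvGen (DG.adj G (EW G Z)) a b := by
    intro a b hab
    by_cases haZ : a ∈ Z <;> by_cases hbZ : b ∈ Z <;>
      simp only [hp, if_pos, if_neg, haZ, hbZ, if_true, if_false] at hab
    · -- both in Z
      have hCeq : CompF G W a = CompF G W b := by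
        simpa using hab
      have hb : b ∈ CompF G W a := hCeq ▸ self_mem_CompF (hZW hbZ)
      have heab : eqv G W a b := (mem_CompF.1 hb).2
      have hpath := confine (x0 := a) heab.1 heab.2 ReflTransGen.refl
      have hCZ : CompF G W a ⊆ Z := (mem_biUnion_facts hT haZ).2.2.2
      have : Relation.ReflTransGen (DG.step G (EW G Z)) a b :=
        Relation.ReflTransGen.mono (fun x y hs => step_mono (EW_mono hCZ) hs) _ _ hpath
      exact rtg_to_eqvgen this
    · exact absurd hab (by simp)
    · exact absurd hab (by simp)
    · simp only [Sum.inl.injEq] at hab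
      exact hab ▸ EqvGen.refl a
  rw [card_quot_eq _ p h1 h2]
  have himage : Finset.image p Finset.univ
      = (Zᶜ.image Sum.inl) ∪ (T.image Sum.inr) := by
    ext x
    simp only [Finset.mem_image, Finset.mem_union, Finset.mem_univ, true_and, Finset.mem_compl]
    constructor
    · rintro ⟨a, rfl⟩
      by_cases haZ : a ∈ Z
      · right
        refine ⟨CompF G W a, (mem_biUnion_facts hT haZ).2.2.1, ?_⟩
        simp [hp, if_pos haZ]
      · left
        exact ⟨a, haZ, by simp [hp, if_neg haZ]⟩
    · rintro (⟨a, haZ, rfl⟩ | ⟨t, ht, rfl⟩)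
      · exact ⟨a, by simp [hp, if_neg haZ]⟩
      · obtain ⟨w, hw, rfl⟩ := Finset.mem_image.1 (hT ht)
        rw [Finset.mem_filter] at hw
        have hwZ : w ∈ Z := Finset.mem_biUnion.2 ⟨_, ht, self_mem_CompF hw.1⟩
        exact ⟨w, by simp [hp, if_pos hwZ]⟩
  rw [himage, Finset.card_union_of_disjoint, Finset.card_image_of_injective _ Sum.inl_injective,
    Finset.card_image_of_injective _ Sum.inr_injective, Finset.card_compl, Fintype.card_fin]
  rw [Finset.disjoint_left]
  rintro x hx hx'
  obtain ⟨a, _, rfl⟩ := Finset.mem_image.1 hx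
  obtain ⟨t, _, h⟩ := Finset.mem_image.1 hx'
  exact Sum.inr_ne_inl h

/-- a nonempty `W` contains a source strong component -/
lemma srcAll_exists {G : DG n k} {W : Finset (Fin n)} (hW : W.Nonempty) :
    ∃ w ∈ W, srcAll G W w := by
  obtain ⟨w0, hw0, hmin⟩ := Finset.exists_min_image W
    (fun w => (W.filter (fun x => RW G W x w)).card) hW
  refine ⟨w0, hw0, ?_⟩
  intro y hy e he hhead
  set t := (G e).1 with hte
  have htW : t ∈ W := (mem_EW.1 he).1
  have hyW : y ∈ W := mem_W_of_eqv hy hw0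
  have hNy : W.filter (fun x => RW G W x y) = W.filter (fun x => RW G W x w0) := by
    ext x
    simp only [Finset.mem_filter]
    exact ⟨fun ⟨h1, h2⟩ => ⟨h1, h2.trans hy.2⟩, fun ⟨h1, h2⟩ => ⟨h1, h2.trans hy.1⟩⟩
  have hsub : W.filter (fun x => RW G W x t) ⊆ W.filter (fun x => RW G W x y) := by
    intro x hx
    rw [Finset.mem_filter] at hx ⊢
    exact ⟨hx.1, hx.2.trans (ReflTransGen.single ⟨e, he, by rw [hte, ← hhead]⟩)⟩
  have hcard : (W.filter (fun x => RW G W x y)).card ≤ (W.filter (fun x => RW G W x t)).card := by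
    rw [hNy]
    exact hmin t htW
  have heq := Finset.eq_of_subset_of_card_le hsub hcard
  have : y ∈ W.filter (fun x => RW G W x t) := by
    rw [heq, Finset.mem_filter]
    exact ⟨hyW, ReflTransGen.refl⟩
  exact (Finset.mem_filter.1 this).2
lemma no_escape {G : DG n k} {W U : Finset (Fin n)}
    (hcl : ∀ e : Fin k, (G e).1 ∈ U → (G e).2 ∈ W → (G e).2 ∈ U) {y z : Fin n}
    (h : RW G W y z) (hy : y ∈ U) : z ∈ U ∨ z ∉ W := by
  induction h with
  | refl => exact Or.inl hy
  | @tail b c hyb hs ih =>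
    obtain ⟨e, he, heq⟩ := hs
    have hbW : b ∈ W := (step_mem_W ⟨e, he, heq⟩).1
    have hcW : c ∈ W := (step_mem_W ⟨e, he, heq⟩).2
    have h1 : (G e).1 = b := by rw [heq]
    have h2 : (G e).2 = c := by rw [heq]
    rcases ih with hbU | hbW'
    · left
      have := hcl e (by rw [h1]; exact hbU) (by rw [h2]; exact hcW)
      rwa [h2] at this
    · exact absurd hbW hbW'

lemma fwd_srcv {G : DG n k} {W U : Finset (Fin n)}
    (hcl : ∀ e : Fin k, (G e).1 ∈ U → (G e).2 ∈ W → (G e).2 ∈ U)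
    (hssc : SSCW G (W \ U)) {z : Fin n} (hz : z ∈ W \ U) : srcv G W z := by
  intro e he hhead
  have htlW : (G e).1 ∈ W := (mem_EW.1 he).1
  have hhdW : (G e).2 ∈ W := (mem_EW.1 he).2
  have htlU : (G e).1 ∉ U := by
    intro h
    have := hcl e h hhdW
    rw [hhead] at this
    exact (Finset.mem_sdiff.1 hz).2 this
  have heZ : e ∈ EW G (W \ U) :=
    mem_EW.2 ⟨Finset.mem_sdiff.2 ⟨htlW, htlU⟩, by rw [hhead]; exact hz⟩
  have := hssc e heZ
  rw [hhead] at this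
  exact Relation.ReflTransGen.mono (fun a b => step_mono (EW_mono Finset.sdiff_subset)) _ _ this

lemma fwd_stay {G : DG n k} {W U : Finset (Fin n)}
    (hcl : ∀ e : Fin k, (G e).1 ∈ U → (G e).2 ∈ W → (G e).2 ∈ U) {z y : Fin n}
    (hz : z ∈ W \ U) (h : eqv G W z y) : y ∈ W \ U := by
  have hyW : y ∈ W := mem_W_of_RW h.1 (Finset.mem_sdiff.1 hz).1
  refine Finset.mem_sdiff.2 ⟨hyW, fun hyU => ?_⟩
  rcases no_escape hcl h.2 hyU with hzU | hzW
  · exact (Finset.mem_sdiff.1 hz).2 hzU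
  · exact hzW (Finset.mem_sdiff.1 hz).1

lemma fwd_srcAll {G : DG n k} {W U : Finset (Fin n)}
    (hcl : ∀ e : Fin k, (G e).1 ∈ U → (G e).2 ∈ W → (G e).2 ∈ U)
    (hssc : SSCW G (W \ U)) {z : Fin n} (hz : z ∈ W \ U) : srcAll G W z :=
  fun y hy => fwd_srcv hcl hssc (fwd_stay hcl hz hy)

lemma fwd_image_subset {G : DG n k} {W U : Finset (Fin n)}
    (hcl : ∀ e : Fin k, (G e).1 ∈ U → (G e).2 ∈ W → (G e).2 ∈ U)
    (hssc : SSCW G (W \ U)) : (W \ U).image (CompF G W) ⊆ SrcComps G W := by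
  intro t ht
  obtain ⟨z, hz, rfl⟩ := Finset.mem_image.1 ht
  exact Finset.mem_image.2 ⟨z, Finset.mem_filter.2
    ⟨(Finset.mem_sdiff.1 hz).1, fwd_srcAll hcl hssc hz⟩, rfl⟩

lemma fwd_biUnion {G : DG n k} {W U : Finset (Fin n)}
    (hcl : ∀ e : Fin k, (G e).1 ∈ U → (G e).2 ∈ W → (G e).2 ∈ U)
    (hssc : SSCW G (W \ U)) : ((W \ U).image (CompF G W)).biUnion id = W \ U := by
  ext z
  constructor
  · intro hz
    obtain ⟨t, ht, hzt⟩ := Finset.mem_biUnion.1 hz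
    obtain ⟨w, hw, rfl⟩ := Finset.mem_image.1 ht
    exact fwd_stay hcl hw (mem_CompF.1 hzt).2
  · intro hz
    exact Finset.mem_biUnion.2 ⟨CompF G W z, Finset.mem_image.2 ⟨z, hz, rfl⟩,
      self_mem_CompF (Finset.mem_sdiff.1 hz).1⟩

lemma bwd_closed {G : DG n k} {W : Finset (Fin n)} {T : Finset (Finset (Fin n))}
    (hT : T ⊆ SrcComps G W) :
    ∀ e : Fin k, (G e).1 ∈ W \ T.biUnion id → (G e).2 ∈ W → (G e).2 ∈ W \ T.biUnion id := by
  set Z := T.biUnion id with hZ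
  intro e h1 h2
  rw [Finset.mem_sdiff] at h1 ⊢
  refine ⟨h2, fun hbZ => ?_⟩
  have heW : e ∈ EW G W := mem_EW.2 ⟨h1.1, h2⟩
  have hsrc : srcv G W (G e).2 := (mem_biUnion_facts hT hbZ).2.1 _ (eqv_refl G W _)
  have hba : RW G W (G e).2 (G e).1 := hsrc e heW rfl
  have heqv : eqv G W (G e).2 (G e).1 :=
    ⟨hba, ReflTransGen.single ⟨e, heW, rfl⟩⟩
  have : (G e).1 ∈ CompF G W (G e).2 := mem_CompF.2 ⟨h1.1, heqv⟩
  exact h1.2 ((mem_biUnion_facts hT hbZ).2.2.2 this)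

lemma bwd_sscw {G : DG n k} {W : Finset (Fin n)} {T : Finset (Finset (Fin n))}
    (hT : T ⊆ SrcComps G W) : SSCW G (T.biUnion id) := by
  set Z := T.biUnion id with hZ
  intro e heZ
  have hends := mem_EW.1 heZ
  have heW : e ∈ EW G W := EW_mono (biUnion_subset_W hT) heZ
  have hsrc : srcv G W (G e).2 := (mem_biUnion_facts hT hends.2).2.1 _ (eqv_refl G W _)
  have hba : RW G W (G e).2 (G e).1 := hsrc e heW rfl
  have hab : RW G W (G e).1 (G e).2 := ReflTransGen.single ⟨e, heW, rfl⟩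
  have hpath := confine (x0 := (G e).2) hba hab ReflTransGen.refl
  have hCZ : CompF G W (G e).2 ⊆ Z := (mem_biUnion_facts hT hends.2).2.2.2
  exact Relation.ReflTransGen.mono (fun a b hs => step_mono (EW_mono hCZ) hs) _ _ hpath

lemma EW_empty (G : DG n k) : EW G ∅ = ∅ := by ext e; simp [mem_EW]

lemma acyclic_empty (G : DG n k) : DG.Acyclic G (∅ : Finset (Fin k)) := by
  intro a ha
  obtain ⟨e, he, _⟩ := transGen_head ha
  exact absurd he (Finset.notMem_empty e)

lemma A_empty (G : DG n k) : A G ∅ = 1 := by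
  rw [A, EW_empty]
  simp [DG.alpha, acyclic_empty]

lemma cC_empty (G : DG n k) : cC G ∅ = n := by
  rw [cC, EW_empty]
  rw [card_quot_eq _ id ?h1 ?h2]
  · simp
  case h1 =>
    intro a b hab
    obtain ⟨e, he, _⟩ := hab
    exact absurd he (Finset.notMem_empty e)
  case h2 =>
    intro a b h
    have hab : a = b := h
    exact hab ▸ Relation.EqvGen.refl a

lemma F_empty (G : DG n k) : F G ∅ = 1 := by
  rw [F, if_pos, cC_empty]
  · rw [npow_parity (b := 0) (by omega), pow_zero]
  · intro e he
    rw [EW_empty] at he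
    exact absurd he (Finset.notMem_empty e)

lemma ssc_cover {G : DG n k} {W : Finset (Fin n)} (hssc : SSCW G W) :
    (SrcComps G W).biUnion id = W := by
  have hall : ∀ w ∈ W, srcAll G W w := by
    intro w _ y _ e he hhead
    have := hssc e he
    rwa [hhead] at this
  ext z
  constructor
  · intro hz
    exact biUnion_subset_W (Finset.Subset.refl _) hz
  · intro hz
    exact Finset.mem_biUnion.2 ⟨CompF G W z,
      Finset.mem_image.2 ⟨z, Finset.mem_filter.2 ⟨hz, hall z hz⟩, rfl⟩, self_mem_CompF hz⟩

lemma cover_unique {G : DG n k} {W : Finset (Fin n)} {T : Finset (Finset (Fin n))}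
    (hT : T ⊆ SrcComps G W) (hcov : T.biUnion id = W) : T = SrcComps G W := by
  refine Finset.Subset.antisymm hT ?_
  intro t ht
  obtain ⟨w, hw, rfl⟩ := Finset.mem_image.1 ht
  rw [Finset.mem_filter] at hw
  have hwZ : w ∈ T.biUnion id := hcov ▸ hw.1
  obtain ⟨hW', _, hC, _⟩ := mem_biUnion_facts hT hwZ
  exact hC

lemma cover_sscw {G : DG n k} {W : Finset (Fin n)} {T : Finset (Finset (Fin n))}
    (hT : T ⊆ SrcComps G W) (hcov : T.biUnion id = W) : SSCW G W := by
  have := bwd_sscw hT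
  rwa [hcov] at this
lemma card_le_n (W : Finset (Fin n)) : W.card ≤ n := by
  have := Finset.card_le_univ W
  simpa using this

lemma A_eq_F (G : DG n k) (W : Finset (Fin n)) : A G W = F G W := by
  induction W using Finset.strongInduction with
  | _ W ih =>
  rcases Finset.eq_empty_or_nonempty W with rfl | hW
  · rw [A_empty, F_empty]
  rw [A_rec G hW]
  have hstep1 : ∀ U ∈ W.powerset.erase ∅,
      (-1:ℤ)^(U.card+1) *
        (if (∀ e : Fin k, (G e).1 ∈ U → (G e).2 ∈ W → (G e).2 ∈ U) then A G (W \ U) else 0)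
      = (-1:ℤ)^(U.card+1) *
        (if (∀ e : Fin k, (G e).1 ∈ U → (G e).2 ∈ W → (G e).2 ∈ U) then F G (W \ U) else 0) := by
    intro U hU
    rw [Finset.mem_erase, Finset.mem_powerset] at hU
    have hss : W \ U ⊂ W := Finset.sdiff_ssubset hU.2 (Finset.nonempty_iff_ne_empty.2 hU.1)
    rw [ih _ hss]
  rw [Finset.sum_congr rfl hstep1]
  have hfil := Finset.sum_filter_of_ne (s := W.powerset.erase ∅)
    (f := fun U => (-1:ℤ)^(U.card+1) *
        (if (∀ e : Fin k, (G e).1 ∈ U → (G e).2 ∈ W → (G e).2 ∈ U) then F G (W \ U) else 0))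
    (p := fun U => (∀ e : Fin k, (G e).1 ∈ U → (G e).2 ∈ W → (G e).2 ∈ U) ∧ SSCW G (W \ U))
    (by
      intro U _ hne
      by_contra hp
      apply hne
      show (-1:ℤ)^(U.card+1) *
        (if (∀ e : Fin k, (G e).1 ∈ U → (G e).2 ∈ W → (G e).2 ∈ U) then F G (W \ U) else 0) = 0
      by_cases h1 : (∀ e : Fin k, (G e).1 ∈ U → (G e).2 ∈ W → (G e).2 ∈ U)
      · rw [if_pos h1, F, if_neg (fun h2 => hp ⟨h1, h2⟩), mul_zero]
      · rw [if_neg h1, mul_zero])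
  rw [← hfil]
  have hbij : ∑ U ∈ (W.powerset.erase ∅).filter
        (fun U => (∀ e : Fin k, (G e).1 ∈ U → (G e).2 ∈ W → (G e).2 ∈ U) ∧ SSCW G (W \ U)),
        (-1:ℤ)^(U.card+1) *
          (if (∀ e : Fin k, (G e).1 ∈ U → (G e).2 ∈ W → (G e).2 ∈ U) then F G (W \ U) else 0)
      = ∑ T ∈ (SrcComps G W).powerset.filter (fun T => T.biUnion id ≠ W),
          (-1:ℤ)^(W.card + 1 + T.card) := by
    refine Finset.sum_nbij' (fun U => (W \ U).image (CompF G W))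
      (fun T => W \ T.biUnion id) ?_ ?_ ?_ ?_ ?_
    · -- membership forward
      intro U hU
      rw [Finset.mem_filter, Finset.mem_erase, Finset.mem_powerset] at hU
      obtain ⟨⟨hUne, hUW⟩, hcl, hssc⟩ := hU
      rw [Finset.mem_filter, Finset.mem_powerset]
      refine ⟨fwd_image_subset hcl hssc, ?_⟩
      rw [fwd_biUnion hcl hssc]
      intro hWU
      obtain ⟨u, hu⟩ := Finset.nonempty_iff_ne_empty.2 hUne
      have : u ∈ W \ U := by rw [hWU]; exact hUW hu
      exact (Finset.mem_sdiff.1 this).2 hu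
    · -- membership backward
      intro T hT
      rw [Finset.mem_filter, Finset.mem_powerset] at hT
      obtain ⟨hTS, hTne⟩ := hT
      rw [Finset.mem_filter, Finset.mem_erase, Finset.mem_powerset]
      have hZW : T.biUnion id ⊆ W := biUnion_subset_W hTS
      refine ⟨⟨?_, Finset.sdiff_subset⟩, bwd_closed hTS, ?_⟩
      · intro hem
        exact hTne (Finset.Subset.antisymm hZW (Finset.sdiff_eq_empty_iff_subset.1 hem))
      · rw [Finset.sdiff_sdiff_eq_self hZW]
        exact bwd_sscw hTS
    · -- left inverse
      intro U hU
      rw [Finset.mem_filter, Finset.mem_erase, Finset.mem_powerset] at hU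
      obtain ⟨⟨_, hUW⟩, hcl, hssc⟩ := hU
      show W \ (((W \ U).image (CompF G W)).biUnion id) = U
      rw [fwd_biUnion hcl hssc, Finset.sdiff_sdiff_eq_self hUW]
    · -- right inverse
      intro T hT
      rw [Finset.mem_filter, Finset.mem_powerset] at hT
      show (W \ (W \ T.biUnion id)).image (CompF G W) = T
      rw [Finset.sdiff_sdiff_eq_self (biUnion_subset_W hT.1), image_CompF_biUnion hT.1]
    · -- values
      intro U hU
      rw [Finset.mem_filter, Finset.mem_erase, Finset.mem_powerset] at hU
      obtain ⟨⟨hUne, hUW⟩, hcl, hssc⟩ := hU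
      show (-1:ℤ)^(U.card+1) *
          (if (∀ e : Fin k, (G e).1 ∈ U → (G e).2 ∈ W → (G e).2 ∈ U) then F G (W \ U) else 0)
        = (-1:ℤ)^(W.card + 1 + ((W \ U).image (CompF G W)).card)
      rw [if_pos hcl, F, if_pos hssc]
      set T := (W \ U).image (CompF G W) with hT
      have hTS : T ⊆ SrcComps G W := fwd_image_subset hcl hssc
      have hcc := comp_count hTS
      rw [fwd_biUnion hcl hssc] at hcc
      have hcCval : cC G (W \ U) = (n - (W \ U).card) + T.card := hcc
      rw [hcCval, ← pow_add]
      refine npow_parity ?_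
      have h1 : (W \ U).card + U.card = W.card := Finset.card_sdiff_add_card_eq_card hUW
      have h2 : (W \ U).card ≤ n := card_le_n _
      omega
  rw [hbij]
  have hSCne : (SrcComps G W).Nonempty := by
    obtain ⟨w, hw, hsrc⟩ := srcAll_exists hW
    exact ⟨CompF G W w, Finset.mem_image.2 ⟨w, Finset.mem_filter.2 ⟨hw, hsrc⟩, rfl⟩⟩
  have hsplit := Finset.sum_filter_add_sum_filter_not (SrcComps G W).powerset
    (fun T => T.biUnion id ≠ W) (fun T => (-1:ℤ)^(W.card + 1 + T.card))
  have htot : ∑ T ∈ (SrcComps G W).powerset, (-1:ℤ)^(W.card + 1 + T.card) = 0 := by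
    calc ∑ T ∈ (SrcComps G W).powerset, (-1:ℤ)^(W.card + 1 + T.card)
        = ∑ T ∈ (SrcComps G W).powerset, (-1:ℤ)^(W.card + 1) * (-1)^T.card := by
          refine Finset.sum_congr rfl (fun T _ => ?_); rw [← pow_add]
      _ = (-1:ℤ)^(W.card + 1) * ∑ T ∈ (SrcComps G W).powerset, (-1:ℤ)^T.card := by
          rw [Finset.mul_sum]
      _ = 0 := by
          rw [sum_powerset_neg_one_pow_card_of_nonempty hSCne, mul_zero]
  by_cases hssc : SSCW G W
  · have hcov : (SrcComps G W).biUnion id = W := ssc_cover hssc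
    have hfilter_eq : (SrcComps G W).powerset.filter
        (fun T => ¬ (T.biUnion id ≠ W)) = {SrcComps G W} := by
      ext T
      rw [Finset.mem_filter, Finset.mem_powerset, Finset.mem_singleton]
      constructor
      · rintro ⟨hTS, hTne⟩
        exact cover_unique hTS (not_not.1 hTne)
      · rintro rfl
        exact ⟨Finset.Subset.refl _, not_not.2 hcov⟩
    have hA : ∑ T ∈ (SrcComps G W).powerset.filter (fun T => T.biUnion id ≠ W),
        (-1:ℤ)^(W.card + 1 + T.card) = -(-1:ℤ)^(W.card + 1 + (SrcComps G W).card) := by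
      have := hsplit
      rw [htot, hfilter_eq, Finset.sum_singleton] at this
      linarith
    rw [hA, F, if_pos hssc]
    have hcc := comp_count (Finset.Subset.refl (SrcComps G W))
    rw [hcov] at hcc
    rw [cC, hcc]
    have h2 : W.card ≤ n := card_le_n _
    have : -(-1:ℤ)^(W.card + 1 + (SrcComps G W).card)
        = (-1:ℤ)^(W.card + 1 + (SrcComps G W).card + 1) := by
      rw [pow_succ]; ring
    rw [this]
    refine npow_parity ?_
    omega
  · have hfilter_eq : (SrcComps G W).powerset.filter
        (fun T => ¬ (T.biUnion id ≠ W)) = ∅ := by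
      rw [Finset.filter_eq_empty_iff]
      intro T hT
      rw [Finset.mem_powerset] at hT
      rw [not_not]
      intro hcov
      exact hssc (cover_sscw hT hcov)
    have hA : ∑ T ∈ (SrcComps G W).powerset.filter (fun T => T.biUnion id ≠ W),
        (-1:ℤ)^(W.card + 1 + T.card) = 0 := by
      have := hsplit
      rw [htot, hfilter_eq, Finset.sum_empty] at this
      linarith
    rw [hA, F, if_neg hssc]

end Statement0

/-- For every directed graph `G` with `n` labeled vertices and `k`
labeled edges, `∑_{H ⊆ G} α(H) = (−1)^k · σ(G)`. -/
theorem sum_alpha_eq_sigma (n k : ℕ) (hn : 1 ≤ n) (G : DG n k) :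
    ∑ S : Finset (Fin k), DG.alpha G S = (-1) ^ k * DG.sigma G Finset.univ := by
  have h1 : ∑ S : Finset (Fin k), DG.alpha G S = Statement0.A G Finset.univ := by
    rw [Statement0.A, Statement0.EW_univ, Finset.powerset_univ]
  rw [h1, Statement0.A_eq_F, Statement0.F, DG.sigma]
  have hiff : Statement0.SSCW G Finset.univ ↔ DG.SSC G Finset.univ := by
    simp only [Statement0.SSCW, Statement0.RW, Statement0.EW_univ, DG.SSC, DG.OnCycle]
  have hcc : Statement0.cC G Finset.univ = DG.beta0 G Finset.univ := by
    rw [Statement0.cC, Statement0.EW_univ, DG.beta0]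
  by_cases hssc : DG.SSC G Finset.univ
  · rw [if_pos (hiff.2 hssc), if_pos hssc, hcc, Finset.card_univ, Fintype.card_fin, ← pow_add]
    exact Statement0.npow_parity (by omega)
  · rw [if_neg (fun h => hssc (hiff.1 h)), if_neg hssc, mul_zero]
end
end

section
/- For every directed graph G with n labeled vertices and k labeled edges, the sum of σ(H) over all 2^k subgraphs H of G equals (−1)^k · α(G). -/
open Finset

open scoped Classical Nat

noncomputable section

namespace DG

open Relation

variable {n k : ℕ}

lemma step_mono (G : DG n k) {S T : Finset (Fin k)} (h : S ⊆ T) {a b : Fin n}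
    (hs : step G S a b) : step G T a b := by
  obtain ⟨e, he, hGe⟩ := hs; exact ⟨e, h he, hGe⟩

lemma acyclic_mono (G : DG n k) {S T : Finset (Fin k)} (h : S ⊆ T)
    (hT : Acyclic G T) : Acyclic G S := fun a ha =>
  hT a (TransGen.mono (fun x y hxy => step_mono G h hxy) _ _ ha)

lemma step_insert_iff (G : DG n k) {e : Fin k} {S : Finset (Fin k)} {a b : Fin n} :
    step G (insert e S) a b ↔ step G S a b ∨ (a = (G e).1 ∧ b = (G e).2) := by
  constructor
  · rintro ⟨f, hf, hGf⟩
    rcases Finset.mem_insert.1 hf with rfl | hf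
    · exact Or.inr ⟨by rw [hGf], by rw [hGf]⟩
    · exact Or.inl ⟨f, hf, hGf⟩
  · rintro (⟨f, hf, hGf⟩ | ⟨rfl, rfl⟩)
    · exact ⟨f, Finset.mem_insert_of_mem hf, hGf⟩
    · exact ⟨e, Finset.mem_insert_self e S, rfl⟩

/-- Splitting a walk in `insert e S` at an occurrence of `e`. -/
lemma transGen_insert (G : DG n k) {e : Fin k} {S : Finset (Fin k)} {a b : Fin n}
    (h : TransGen (step G (insert e S)) a b) :
    TransGen (step G S) a b ∨
      (ReflTransGen (step G (insert e S)) (G e).2 b ∧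
       ReflTransGen (step G (insert e S)) a (G e).1) := by
  induction h with
  | single hab =>
    rcases (step_insert_iff G).1 hab with hs | ⟨rfl, rfl⟩
    · exact Or.inl (TransGen.single hs)
    · exact Or.inr ⟨ReflTransGen.refl, ReflTransGen.refl⟩
  | tail hac hcb ih =>
    rename_i c b'
    rcases (step_insert_iff G).1 hcb with hs | ⟨hc, hb⟩
    · rcases ih with h1 | ⟨h1, h2⟩
      · exact Or.inl (h1.tail hs)
      · exact Or.inr ⟨h1.tail hcb, h2⟩
    · rcases ih with h1 | ⟨h1, h2⟩
      · refine Or.inr ⟨hb ▸ ReflTransGen.refl, ?_⟩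
        exact hc ▸ (TransGen.mono (fun x y hxy => step_mono G (Finset.subset_insert e S) hxy) _ _ h1).to_reflTransGen
      · exact Or.inr ⟨hb ▸ ReflTransGen.refl, hc ▸ h2⟩

lemma acyclic_insert (G : DG n k) {U : Finset (Fin k)} {e : Fin k} (he : e ∈ U)
    (hc : ¬ OnCycle G U e) {S : Finset (Fin k)} (hS : S ⊆ U) (hA : Acyclic G S) :
    Acyclic G (insert e S) := by
  intro a ha
  rcases transGen_insert G ha with h1 | ⟨h1, h2⟩
  · exact hA a h1
  · apply hc
    have hsub : insert e S ⊆ U := Finset.insert_subset he hS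
    exact ReflTransGen.mono (fun x y hxy => step_mono G hsub hxy) _ _ (h1.trans h2)

/-- The sign-reversing toggle involution when some edge of `U` is on no cycle. -/
lemma sum_alpha_eq_zero (G : DG n k) {U : Finset (Fin k)} {e : Fin k} (he : e ∈ U)
    (hc : ¬ OnCycle G U e) : ∑ S ∈ U.powerset, alpha G S = 0 := by
  refine Finset.sum_involution
    (fun S _ => if e ∈ S then S.erase e else insert e S) ?_ ?_ ?_ ?_
  · intro S hS
    rw [Finset.mem_powerset] at hS
    by_cases heS : e ∈ S
    · simp only [heS, if_pos]
      have hins : insert e (S.erase e) = S := Finset.insert_erase heS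
      have hcard : S.card = (S.erase e).card + 1 := (Finset.card_erase_add_one heS).symm
      by_cases hA : Acyclic G S
      · have hA' : Acyclic G (S.erase e) := acyclic_mono G (Finset.erase_subset e S) hA
        rw [alpha, alpha, if_pos hA, if_pos hA', hcard, pow_succ]
        ring
      · have hA' : ¬ Acyclic G (S.erase e) := by
          intro h
          exact hA (hins ▸ acyclic_insert G he hc ((Finset.erase_subset e S).trans hS) h)
        rw [alpha, alpha, if_neg hA, if_neg hA', add_zero]
    · simp only [heS, if_neg, if_false]
      have hcard : (insert e S).card = S.card + 1 := Finset.card_insert_of_notMem heS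
      by_cases hA : Acyclic G S
      · have hA' : Acyclic G (insert e S) := acyclic_insert G he hc hS hA
        rw [alpha, alpha, if_pos hA, if_pos hA', hcard, pow_succ]
        ring
      · have hA' : ¬ Acyclic G (insert e S) := by
          intro h
          exact hA (acyclic_mono G (Finset.subset_insert e S) h)
        rw [alpha, alpha, if_neg hA, if_neg hA', add_zero]
  · intro S hS hne
    by_cases heS : e ∈ S
    · simp only [heS, if_pos]
      intro h
      exact Finset.notMem_erase e S (h.symm ▸ heS)
    · simp only [heS, if_neg, if_false]
      intro h
      exact heS (h ▸ Finset.mem_insert_self e S)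
  · intro S hS
    rw [Finset.mem_powerset] at hS ⊢
    by_cases heS : e ∈ S
    · simpa [heS] using (Finset.erase_subset e S).trans hS
    · simpa [heS] using Finset.insert_subset he hS
  · intro S hS
    by_cases heS : e ∈ S
    · simp [heS, Finset.notMem_erase, Finset.insert_erase heS]
    · simp [heS, Finset.erase_insert heS]

end DG

namespace DG

open Relation

variable {n k : ℕ}

def supp (G : DG n k) (U : Finset (Fin k)) : Finset (Fin n) :=
  Finset.univ.filter (fun x => ∃ f ∈ U, (G f).1 = x ∨ (G f).2 = x)

lemma fst_mem_supp (G : DG n k) {U : Finset (Fin k)} {f : Fin k} (hf : f ∈ U) :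
    (G f).1 ∈ supp G U := Finset.mem_filter.2 ⟨Finset.mem_univ _, f, hf, Or.inl rfl⟩

lemma snd_mem_supp (G : DG n k) {U : Finset (Fin k)} {f : Fin k} (hf : f ∈ U) :
    (G f).2 ∈ supp G U := Finset.mem_filter.2 ⟨Finset.mem_univ _, f, hf, Or.inr rfl⟩

lemma exists_sink (G : DG n k) {U S : Finset (Fin k)} (hS : S ⊆ U) (hA : Acyclic G S)
    (hsupp : (supp G U).Nonempty) : ∃ x ∈ supp G U, ∀ f ∈ S, (G f).1 ≠ x := by
  haveI : IsTrans (Fin n) (fun x y => TransGen (step G S) y x) :=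
    ⟨fun a b c hab hbc => hbc.trans hab⟩
  haveI : IsIrrefl (Fin n) (fun x y => TransGen (step G S) y x) := ⟨fun a h => hA a h⟩
  obtain ⟨m, hm, hmin⟩ := (Finite.wellFounded_of_trans_of_irrefl
    (fun x y => TransGen (step G S) y x)).has_min (↑(supp G U)) hsupp.to_set
  refine ⟨m, hm, ?_⟩
  intro f hf h1
  have hz : step G S m (G f).2 := ⟨f, hf, by rw [← h1]⟩
  exact hmin ((G f).2) (snd_mem_supp G (hS hf)) (TransGen.single hz)

lemma adj_symm (G : DG n k) {U : Finset (Fin k)} {a b : Fin n} (h : adj G U a b) :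
    adj G U b a := by obtain ⟨f, hf, h1⟩ := h; exact ⟨f, hf, h1.symm⟩

lemma adj_of_edge (G : DG n k) {U : Finset (Fin k)} {f : Fin k} (hf : f ∈ U) :
    adj G U (G f).1 (G f).2 := ⟨f, hf, Or.inl rfl⟩

lemma reach_of_adj (G : DG n k) {U : Finset (Fin k)} (hU : SSC G U) {a b : Fin n}
    (h : adj G U a b) : ReflTransGen (step G U) a b := by
  obtain ⟨f, hf, hGf | hGf⟩ := h
  · exact ReflTransGen.single ⟨f, hf, hGf⟩
  · have h2 := hU f hf
    rw [OnCycle, hGf] at h2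
    exact h2

lemma reach_of_conn (G : DG n k) {U : Finset (Fin k)} (hU : SSC G U) {a b : Fin n}
    (h : EqvGen (adj G U) a b) :
    ReflTransGen (step G U) a b ∧ ReflTransGen (step G U) b a := by
  induction h with
  | rel x y hxy => exact ⟨reach_of_adj G hU hxy, reach_of_adj G hU (adj_symm G hxy)⟩
  | refl x => exact ⟨.refl, .refl⟩
  | symm x y _ ih => exact ⟨ih.2, ih.1⟩
  | trans x y z _ _ ih1 ih2 => exact ⟨ih1.1.trans ih2.1, ih2.2.trans ih1.2⟩

lemma mem_supp_of_conn (G : DG n k) {U : Finset (Fin k)} {x y : Fin n}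
    (h : EqvGen (adj G U) x y) : x = y ∨ (x ∈ supp G U ∧ y ∈ supp G U) := by
  induction h with
  | rel a b hab =>
    obtain ⟨f, hf, h1 | h1⟩ := hab
    · exact Or.inr ⟨by rw [← show (G f).1 = a from by rw [h1]]; exact fst_mem_supp G hf,
        by rw [← show (G f).2 = b from by rw [h1]]; exact snd_mem_supp G hf⟩
    · exact Or.inr ⟨by rw [← show (G f).2 = a from by rw [h1]]; exact snd_mem_supp G hf,
        by rw [← show (G f).1 = b from by rw [h1]]; exact fst_mem_supp G hf⟩
  | refl a => exact Or.inl rfl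
  | symm a b _ ih => rcases ih with rfl | ⟨h1, h2⟩; exacts [Or.inl rfl, Or.inr ⟨h2, h1⟩]
  | trans a b c _ _ ih1 ih2 =>
    rcases ih1 with rfl | ⟨h1, h2⟩
    · exact ih2
    · rcases ih2 with rfl | ⟨h3, h4⟩
      · exact Or.inr ⟨h1, h2⟩
      · exact Or.inr ⟨h1, h4⟩

def delOut (G : DG n k) (B : Finset (Fin n)) (U : Finset (Fin k)) : Finset (Fin k) :=
  U.filter (fun f => (G f).1 ∉ B)

def Closed (G : DG n k) (U : Finset (Fin k)) (B : Finset (Fin n)) : Prop :=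
  ∀ x y, EqvGen (adj G U) x y → x ∈ B → y ∈ B

lemma delOut_subset (G : DG n k) (B : Finset (Fin n)) (U : Finset (Fin k)) :
    delOut G B U ⊆ U := Finset.filter_subset _ _

lemma delOut_edge (G : DG n k) {U : Finset (Fin k)} {B : Finset (Fin n)}
    (hB : Closed G U B) {f : Fin k} (hf : f ∈ delOut G B U) :
    (G f).1 ∉ B ∧ (G f).2 ∉ B := by
  obtain ⟨hfU, h1⟩ := Finset.mem_filter.1 hf
  refine ⟨h1, fun h2 => h1 ?_⟩
  exact hB _ _ (EqvGen.rel _ _ (adj_symm G (adj_of_edge G hfU))) h2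

lemma reflTransGen_delOut (G : DG n k) {U : Finset (Fin k)} {B : Finset (Fin n)}
    (hB : Closed G U B) {a b : Fin n} (h : ReflTransGen (step G U) a b) (ha : a ∉ B) :
    ReflTransGen (step G (delOut G B U)) a b ∧ b ∉ B := by
  induction h with
  | refl => exact ⟨.refl, ha⟩
  | tail hac hcb ih =>
    obtain ⟨p, hcB⟩ := ih
    obtain ⟨g, hg, hGg⟩ := hcb
    have ht : (G g).1 ∉ B := by rw [hGg]; exact hcB
    have hgd : g ∈ delOut G B U := Finset.mem_filter.2 ⟨hg, ht⟩
    have hbB : _ ∉ B := fun hbB => hcB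
      (hB _ _ (EqvGen.rel _ _ (adj_symm G ⟨g, hg, Or.inl hGg⟩)) hbB)
    exact ⟨p.tail ⟨g, hgd, hGg⟩, hbB⟩

lemma ssc_delOut (G : DG n k) {U : Finset (Fin k)} {B : Finset (Fin n)}
    (hU : SSC G U) (hB : Closed G U B) : SSC G (delOut G B U) := by
  intro f hf
  have hfU : f ∈ U := (Finset.mem_filter.1 hf).1
  have h2 : (G f).2 ∉ B := (delOut_edge G hB hf).2
  exact (reflTransGen_delOut G hB (hU f hfU) h2).1

lemma exists_entry (G : DG n k) {U : Finset (Fin k)} {B : Finset (Fin n)} {b : Fin n}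
    (hb : b ∈ B) : ∀ {x}, ReflTransGen (step G U) x b → x ∉ B →
    ∃ g ∈ U, (G g).1 ∉ B ∧ (G g).2 ∈ B := by
  intro x h
  induction h using ReflTransGen.head_induction_on with
  | refl => exact fun hx => absurd hb hx
  | @head a c hxc hcb ih =>
    intro hx
    obtain ⟨g, hg, hGg⟩ := hxc
    by_cases hcB : c ∈ B
    · refine ⟨g, hg, ?_, ?_⟩
      · rw [hGg]; exact hx
      · rw [hGg]; exact hcB
    · exact ih hcB

lemma closed_of_ssc_delOut (G : DG n k) {U : Finset (Fin k)} {B : Finset (Fin n)}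
    (hU : SSC G U) (hD : SSC G (delOut G B U)) : Closed G U B := by
  have key : ∀ x y, adj G U x y → x ∈ B → y ∈ B := by
    intro x y hxy hxB
    by_contra hyB
    have hp : ReflTransGen (step G U) y x := reach_of_adj G hU (adj_symm G hxy)
    obtain ⟨g, hg, hg1, hg2⟩ := exists_entry G hxB hp hyB
    have hgd : g ∈ delOut G B U := Finset.mem_filter.2 ⟨hg, hg1⟩
    have hcyc := hD g hgd
    rcases hcyc.cases_head with heq | ⟨c, ⟨g', hg', hGg'⟩, _⟩
    · exact hg1 (heq ▸ hg2)
    · have ht : (G g').1 = (G g).2 := by rw [hGg']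
      exact (Finset.mem_filter.1 hg').2 (ht ▸ hg2)
  have main : ∀ x y, EqvGen (adj G U) x y → (x ∈ B ↔ y ∈ B) := by
    intro x y h
    induction h with
    | rel a b hab => exact ⟨key a b hab, key b a (adj_symm G hab)⟩
    | refl a => exact Iff.rfl
    | symm a b _ ih => exact ih.symm
    | trans a b c _ _ ih1 ih2 => exact ih1.trans ih2
  exact fun x y h hx => (main x y h).1 hx

end DG

namespace DG

open Relation

variable {n k : ℕ}

lemma acyclic_empty (G : DG n k) : Acyclic G (∅ : Finset (Fin k)) := by
  intro a h
  have hst : ∀ b c : Fin n, step G ∅ b c → False := by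
    rintro b c ⟨f, hf, -⟩; exact absurd hf (Finset.notMem_empty f)
  cases h with
  | single hs => exact hst _ _ hs
  | tail _ hs => exact hst _ _ hs

lemma ssc_empty (G : DG n k) : SSC G (∅ : Finset (Fin k)) :=
  fun e he => absurd he (Finset.notMem_empty e)

lemma beta0_empty (G : DG n k) : beta0 G (∅ : Finset (Fin k)) = n := by
  have h : ∀ x y : Fin n, adj G ∅ x y → x = y := by
    rintro x y ⟨f, hf, -⟩; exact absurd hf (Finset.notMem_empty f)
  have e : Quot (adj G (∅ : Finset (Fin k))) ≃ Fin n := by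
    refine ⟨Quot.lift id h, Quot.mk _, ?_, ?_⟩
    · intro q; induction q using Quot.ind; rfl
    · intro x; rfl
  rw [beta0, Nat.card_congr e, Nat.card_eq_fintype_card, Fintype.card_fin]

lemma adj_delOut_facts (G : DG n k) {U : Finset (Fin k)} {B : Finset (Fin n)}
    (hB : Closed G U B) {a b : Fin n} (hab : adj G (delOut G B U) a b) :
    a ∉ B ∧ b ∉ B ∧ adj G U a b := by
  obtain ⟨f, hf, h1 | h1⟩ := hab
  · obtain ⟨h2, h3⟩ := delOut_edge G hB hf
    rw [h1] at h2 h3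
    exact ⟨h2, h3, ⟨f, (Finset.mem_filter.1 hf).1, Or.inl h1⟩⟩
  · obtain ⟨h2, h3⟩ := delOut_edge G hB hf
    rw [h1] at h2 h3
    exact ⟨h3, h2, ⟨f, (Finset.mem_filter.1 hf).1, Or.inr h1⟩⟩

lemma conn_delOut (G : DG n k) {U : Finset (Fin k)} {B : Finset (Fin n)}
    (hB : Closed G U B) : ∀ x y, EqvGen (adj G U) x y →
    (x ∈ B ↔ y ∈ B) ∧ (x ∉ B → EqvGen (adj G (delOut G B U)) x y) := by
  intro x y h
  induction h with
  | rel a b hab =>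
    refine ⟨⟨hB a b (.rel _ _ hab), hB b a (.rel _ _ (adj_symm G hab))⟩, ?_⟩
    intro haB
    have hbB : b ∉ B := fun hbB => haB (hB b a (.rel _ _ (adj_symm G hab)) hbB)
    obtain ⟨f, hf, h1 | h1⟩ := hab
    · have hfD : f ∈ delOut G B U := Finset.mem_filter.2 ⟨hf, by rw [h1]; exact haB⟩
      exact .rel _ _ ⟨f, hfD, Or.inl h1⟩
    · have hfD : f ∈ delOut G B U := Finset.mem_filter.2 ⟨hf, by rw [h1]; exact hbB⟩
      exact .rel _ _ ⟨f, hfD, Or.inr h1⟩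
  | refl a => exact ⟨Iff.rfl, fun _ => .refl a⟩
  | symm a b _ ih =>
    exact ⟨ih.1.symm, fun hbB => (ih.2 (fun haB => hbB (ih.1.1 haB))).symm⟩
  | trans a b c _ _ ih1 ih2 =>
    exact ⟨ih1.1.trans ih2.1, fun haB =>
      (ih1.2 haB).trans _ _ _ (ih2.2 (fun hbB => haB (ih1.1.2 hbB)))⟩

lemma beta0_delOut (G : DG n k) {U : Finset (Fin k)} {B : Finset (Fin n)}
    (hB : Closed G U B) :
    beta0 G (delOut G B U) + (B.image (Quot.mk (adj G U))).card
      = beta0 G U + B.card := by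
  classical
  set D := delOut G B U with hD
  set J := B.image (Quot.mk (adj G U)) with hJ
  have hmem : ∀ x : Fin n, x ∉ B → Quot.mk (adj G U) x ∉ J := by
    intro x hx hmemJ
    obtain ⟨b, hb, hbe⟩ := Finset.mem_image.1 hmemJ
    exact hx (hB b x (Quot.eqvGen_exact hbe) hb)
  have wf : ∀ a b : Fin n, adj G D a b →
      (fun x => if hx : x ∈ B then (Sum.inl ⟨x, hx⟩ : ↥B ⊕ {q : Quot (adj G U) // q ∉ J})
        else Sum.inr ⟨Quot.mk _ x, hmem x hx⟩) a
      = (fun x => if hx : x ∈ B then (Sum.inl ⟨x, hx⟩ : ↥B ⊕ {q : Quot (adj G U) // q ∉ J})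
        else Sum.inr ⟨Quot.mk _ x, hmem x hx⟩) b := by
    intro a b hab
    obtain ⟨haB, hbB, habU⟩ := adj_delOut_facts G hB hab
    simp only [dif_neg haB, dif_neg hbB]
    congr 1
    exact Subtype.ext (Quot.sound habU)
  let F : Quot (adj G D) → ↥B ⊕ {q : Quot (adj G U) // q ∉ J} := Quot.lift _ wf
  have hFbij : Function.Bijective F := by
    constructor
    · intro q1 q2
      induction q1 using Quot.ind with | _ x =>
      induction q2 using Quot.ind with | _ y =>
      intro hxy
      by_cases hx : x ∈ B <;> by_cases hy : y ∈ B <;>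
        simp only [F, Quot.lift, dif_pos, dif_neg, hx, hy] at hxy
      · cases hxy; rfl
      · exact absurd hxy (by simp)
      · exact absurd hxy (by simp)
      · have h1 : Quot.mk (adj G U) x = Quot.mk (adj G U) y := congrArg Subtype.val
          (Sum.inr_injective hxy)
        exact Quot.eqvGen_sound ((conn_delOut G hB x y (Quot.eqvGen_exact h1)).2 hx)
    · rintro (⟨b, hb⟩ | ⟨q, hq⟩)
      · exact ⟨Quot.mk _ b, by simp only [F, Quot.lift, dif_pos hb]⟩
      · obtain ⟨x, rfl⟩ := Quot.exists_rep q
        have hx : x ∉ B := fun hx => hq (Finset.mem_image.2 ⟨x, hx, rfl⟩)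
        exact ⟨Quot.mk _ x, by simp only [F, Quot.lift, dif_neg hx]⟩
  haveI : Finite (Quot (adj G U)) :=
    Finite.of_surjective (Quot.mk _) (fun q => Quot.exists_rep q)
  haveI : Finite (Quot (adj G D)) :=
    Finite.of_surjective (Quot.mk _) (fun q => Quot.exists_rep q)
  have h1 : beta0 G D = Nat.card (↥B ⊕ {q : Quot (adj G U) // q ∉ J}) :=
    Nat.card_eq_of_bijective F hFbij
  have h2 : Nat.card (↥B ⊕ {q : Quot (adj G U) // q ∉ J})
      = B.card + Nat.card {q : Quot (adj G U) // q ∉ J} := by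
    rw [Nat.card_sum, Nat.card_eq_fintype_card (α := ↥B), Fintype.card_coe]
  have h3 : beta0 G U = J.card + Nat.card {q : Quot (adj G U) // q ∉ J} := by
    have e := Equiv.sumCompl (fun q : Quot (adj G U) => q ∈ J)
    have := Nat.card_congr e
    rw [Nat.card_sum] at this
    have hJc : Nat.card {q : Quot (adj G U) // q ∈ J} = J.card := by
      rw [Nat.card_eq_fintype_card (α := {q : Quot (adj G U) // q ∈ J})]
      exact Fintype.card_coe J
    rw [beta0, ← this, hJc]
  omega

end DG

namespace DG

open Relation

variable {n k : ℕ}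

/-- parity helper -/
lemma npc (a b : ℕ) (h : a % 2 = b % 2) : ((-1 : ℤ)) ^ a = (-1) ^ b := by
  calc ((-1:ℤ))^a = ((-1:ℤ))^(2*(a/2) + a%2) := by rw [Nat.div_add_mod a 2]
  _ = (((-1:ℤ))^2)^(a/2) * (-1)^(a%2) := by rw [pow_add, pow_mul]
  _ = (-1)^(a%2) := by rw [neg_one_sq, one_pow, one_mul]
  _ = (-1)^(b%2) := by rw [h]
  _ = (((-1:ℤ))^2)^(b/2) * (-1)^(b%2) := by rw [neg_one_sq, one_pow, one_mul]
  _ = ((-1:ℤ))^(2*(b/2) + b%2) := by rw [pow_add, pow_mul]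
  _ = ((-1:ℤ))^b := by rw [Nat.div_add_mod b 2]

lemma sum_erase_empty_pow {α : Type*} [DecidableEq α] {W : Finset α} (hW : W.Nonempty) :
    ∑ B ∈ W.powerset.erase ∅, ((-1 : ℤ)) ^ B.card = -1 := by
  have h0 : ∑ B ∈ W.powerset, ((-1 : ℤ)) ^ B.card = 0 := by
    rw [Finset.sum_powerset_neg_one_pow_card, if_neg (Finset.nonempty_iff_ne_empty.1 hW)]
  have h1 : ∑ B ∈ W.powerset.erase ∅, ((-1 : ℤ)) ^ B.card + ((-1 : ℤ)) ^ (∅ : Finset α).card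
      = ∑ B ∈ W.powerset, ((-1 : ℤ)) ^ B.card :=
    Finset.sum_erase_add _ _ (Finset.empty_mem_powerset W)
  simp only [Finset.card_empty, pow_zero] at h1
  omega

def Dsum (G : DG n k) (U : Finset (Fin k)) : ℤ := ∑ S ∈ U.powerset, alpha G S

lemma powerset_filter_delOut (G : DG n k) (U : Finset (Fin k)) (B : Finset (Fin n)) :
    U.powerset.filter (fun S => ∀ f ∈ S, (G f).1 ∉ B) = (delOut G B U).powerset := by
  ext S
  simp only [Finset.mem_filter, Finset.mem_powerset]
  constructor
  · rintro ⟨h1, h2⟩ f hf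
    exact Finset.mem_filter.2 ⟨h1 hf, h2 f hf⟩
  · intro h
    exact ⟨fun f hf => (Finset.mem_filter.1 (h hf)).1,
      fun f hf => (Finset.mem_filter.1 (h hf)).2⟩

lemma Dsum_eq (G : DG n k) : ∀ U : Finset (Fin k),
    Dsum G U = if SSC G U then (-1) ^ (n + beta0 G U) else 0 := by
  intro U
  induction U using Finset.strongInduction with
  | _ U ih =>
  by_cases hssc : SSC G U
  case neg =>
    rw [if_neg hssc]
    rw [SSC] at hssc
    push_neg at hssc
    obtain ⟨e, he, hc⟩ := hssc
    exact sum_alpha_eq_zero G he hc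
  case pos =>
  rw [if_pos hssc]
  by_cases hU : U = ∅
  · subst hU
    rw [Dsum, Finset.powerset_empty, Finset.sum_singleton, alpha,
      if_pos (acyclic_empty G), beta0_empty G, Finset.card_empty, pow_zero]
    exact ((Even.add_self n).neg_one_pow).symm
  -- main case
  have hUne : U.Nonempty := Finset.nonempty_iff_ne_empty.2 hU
  obtain ⟨f₀, hf₀⟩ := hUne
  have hsupp : (supp G U).Nonempty := ⟨(G f₀).1, fst_mem_supp G hf₀⟩
  set Bs := (supp G U).powerset.erase ∅ with hBs
  have step1 : ∀ S ∈ U.powerset, alpha G S =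
      ∑ B ∈ Bs, (if ∀ f ∈ S, (G f).1 ∉ B then ((-1 : ℤ) ^ (B.card + 1)) * alpha G S else 0) := by
    intro S hS
    by_cases hA : Acyclic G S
    · set W := (supp G U).filter (fun x => ∀ f ∈ S, (G f).1 ≠ x) with hW
      have hWne : W.Nonempty := by
        obtain ⟨x, hx1, hx2⟩ := exists_sink G (Finset.mem_powerset.1 hS) hA hsupp
        exact ⟨x, Finset.mem_filter.2 ⟨hx1, hx2⟩⟩
      rw [← Finset.sum_filter]
      have hfe : Bs.filter (fun B => ∀ f ∈ S, (G f).1 ∉ B) = W.powerset.erase ∅ := by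
        ext B
        simp only [hBs, Finset.mem_filter, Finset.mem_erase, Finset.mem_powerset, hW]
        constructor
        · rintro ⟨⟨hne, hsub⟩, hcond⟩
          refine ⟨hne, fun x hx => Finset.mem_filter.2 ⟨hsub hx, fun f hf h1 => ?_⟩⟩
          exact hcond f hf (h1 ▸ hx)
        · rintro ⟨hne, hsub⟩
          refine ⟨⟨hne, fun x hx => (Finset.mem_filter.1 (hsub hx)).1⟩, ?_⟩
          intro f hf hmem
          exact (Finset.mem_filter.1 (hsub hmem)).2 f hf rfl
      rw [hfe, ← Finset.sum_mul]
      have : ∑ B ∈ W.powerset.erase ∅, ((-1 : ℤ)) ^ (B.card + 1) = 1 := by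
        have h2 : ∑ B ∈ W.powerset.erase ∅, ((-1 : ℤ)) ^ (B.card + 1)
            = - ∑ B ∈ W.powerset.erase ∅, ((-1 : ℤ)) ^ B.card := by
          rw [← Finset.sum_neg_distrib]
          exact Finset.sum_congr rfl fun B _ => by rw [pow_succ]; ring
        rw [h2, sum_erase_empty_pow hWne]; ring
      rw [this, one_mul]
    · have h0 : alpha G S = 0 := by rw [alpha, if_neg hA]
      rw [h0]
      refine (Finset.sum_eq_zero fun B _ => ?_).symm
      rw [mul_zero, ite_self]
  have step2 : Dsum G U = ∑ B ∈ Bs, (-1 : ℤ) ^ (B.card + 1) * Dsum G (delOut G B U) := by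
    rw [Dsum, Finset.sum_congr rfl step1, Finset.sum_comm]
    refine Finset.sum_congr rfl fun B _ => ?_
    rw [← Finset.sum_filter, powerset_filter_delOut, Dsum, Finset.mul_sum]
  have hclosedJ : ∀ J : Finset (Quot (adj G U)),
      Closed G U (Finset.univ.filter (fun x => Quot.mk (adj G U) x ∈ J)) := by
    intro J x y hconn hx
    have := Quot.eqvGen_sound hconn
    rw [Finset.mem_filter] at hx ⊢
    exact ⟨Finset.mem_univ _, this ▸ hx.2⟩
  have hdelmem : ∀ B ∈ Bs, delOut G B U ⊂ U := by
    intro B hB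
    obtain ⟨hBne, hBsub⟩ := Finset.mem_erase.1 hB
    rw [Finset.mem_powerset] at hBsub
    obtain ⟨b, hb⟩ := Finset.nonempty_iff_ne_empty.2 hBne
    obtain ⟨-, g, hg, hcase⟩ := Finset.mem_filter.1 (hBsub hb)
    refine Finset.ssubset_iff_of_subset (delOut_subset G B U) |>.2 ?_
    rcases hcase with h1 | h2
    · exact ⟨g, hg, fun hmem => (Finset.mem_filter.1 hmem).2 (h1 ▸ hb)⟩
    · rcases (hssc g hg).cases_head with heq | ⟨c, ⟨g', hg', hGg'⟩, -⟩
      · refine ⟨g, hg, fun hmem => (Finset.mem_filter.1 hmem).2 ?_⟩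
        rw [← heq, h2]; exact hb
      · refine ⟨g', hg', fun hmem => (Finset.mem_filter.1 hmem).2 ?_⟩
        have : (G g').1 = (G g).2 := by rw [hGg']
        rw [this, h2]; exact hb
  have step3 : Dsum G U
      = ∑ B ∈ Bs.filter (fun B => SSC G (delOut G B U)),
          (-1 : ℤ) ^ (B.card + 1) * (-1) ^ (n + beta0 G (delOut G B U)) := by
    rw [step2, ← Finset.sum_filter_add_sum_filter_not Bs (fun B => SSC G (delOut G B U))]
    have hz : ∑ B ∈ Bs.filter (fun B => ¬ SSC G (delOut G B U)),
        (-1 : ℤ) ^ (B.card + 1) * Dsum G (delOut G B U) = 0 := by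
      refine Finset.sum_eq_zero fun B hB => ?_
      obtain ⟨hB1, hB2⟩ := Finset.mem_filter.1 hB
      rw [ih _ (hdelmem B hB1), if_neg hB2, mul_zero]
    rw [hz, add_zero]
    refine Finset.sum_congr rfl fun B hB => ?_
    obtain ⟨hB1, hB2⟩ := Finset.mem_filter.1 hB
    rw [ih _ (hdelmem B hB1), if_pos hB2]
  set mkU := Quot.mk (adj G U) with hmkU
  set CompS := (supp G U).image mkU with hCompS
  have step4 : Dsum G U = ∑ J ∈ CompS.powerset.erase ∅,
      (-1 : ℤ) ^ J.card * (-1) ^ (n + beta0 G U + 1) := by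
    rw [step3]
    refine Finset.sum_nbij' (i := fun B => B.image mkU)
      (j := fun J => Finset.univ.filter (fun x => mkU x ∈ J)) ?_ ?_ ?_ ?_ ?_
    · intro B hB
      obtain ⟨hB1, hB2⟩ := Finset.mem_filter.1 hB
      obtain ⟨hBne, hBsub⟩ := Finset.mem_erase.1 hB1
      rw [Finset.mem_powerset] at hBsub
      refine Finset.mem_erase.2 ⟨?_, Finset.mem_powerset.2 (Finset.image_subset_image hBsub)⟩
      rw [← Finset.nonempty_iff_ne_empty] at hBne ⊢
      exact hBne.image mkU
    · intro J hJ
      obtain ⟨hJne, hJsub⟩ := Finset.mem_erase.1 hJ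
      rw [Finset.mem_powerset] at hJsub
      refine Finset.mem_filter.2 ⟨Finset.mem_erase.2 ⟨?_, Finset.mem_powerset.2 ?_⟩, ?_⟩
      · rw [← Finset.nonempty_iff_ne_empty] at hJne ⊢
        obtain ⟨q, hq⟩ := hJne
        obtain ⟨y, hy, rfl⟩ := Finset.mem_image.1 (hJsub hq)
        exact ⟨y, Finset.mem_filter.2 ⟨Finset.mem_univ _, hq⟩⟩
      · intro x hx
        obtain ⟨-, hx2⟩ := Finset.mem_filter.1 hx
        obtain ⟨y, hy, hyx⟩ := Finset.mem_image.1 (hJsub hx2)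
        rcases mem_supp_of_conn G (Quot.eqvGen_exact hyx) with rfl | ⟨-, h2⟩
        · exact hy
        · exact h2
      · exact ssc_delOut G hssc (hclosedJ J)
    · intro B hB
      obtain ⟨hB1, hB2⟩ := Finset.mem_filter.1 hB
      have hcl : Closed G U B := closed_of_ssc_delOut G hssc hB2
      ext x
      simp only [Finset.mem_filter, Finset.mem_univ, true_and, Finset.mem_image]
      constructor
      · rintro ⟨b, hb, hbx⟩
        exact hcl b x (Quot.eqvGen_exact hbx) hb
      · intro hx
        exact ⟨x, hx, rfl⟩
    · intro J hJ
      obtain ⟨hJne, hJsub⟩ := Finset.mem_erase.1 hJ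
      rw [Finset.mem_powerset] at hJsub
      ext q
      simp only [Finset.mem_image, Finset.mem_filter, Finset.mem_univ, true_and]
      constructor
      · rintro ⟨x, hx, rfl⟩
        exact hx
      · intro hq
        obtain ⟨y, hy, rfl⟩ := Finset.mem_image.1 (hJsub hq)
        exact ⟨y, hq, rfl⟩
    · intro B hB
      obtain ⟨hB1, hB2⟩ := Finset.mem_filter.1 hB
      have hcl : Closed G U B := closed_of_ssc_delOut G hssc hB2
      have hbeta := beta0_delOut G hcl
      rw [← hmkU] at hbeta
      rw [← pow_add, ← pow_add]
      exact npc _ _ (by omega)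
  have hCompSne : CompS.Nonempty := hsupp.image mkU
  have hfin : (-1 : ℤ) * (-1 : ℤ) ^ (n + beta0 G U + 1) = (-1) ^ (n + beta0 G U + 2) := by
    rw [pow_succ]; ring
  rw [step4, ← Finset.sum_mul, sum_erase_empty_pow hCompSne, hfin]
  exact npc _ _ (by omega)

end DG

namespace DG

variable {n k : ℕ}

lemma sigma_eq_Dsum (G : DG n k) (T : Finset (Fin k)) :
    sigma G T = (-1) ^ T.card * Dsum G T := by
  rw [Dsum_eq G T, sigma]
  by_cases h : SSC G T
  · rw [if_pos h, if_pos h, ← pow_add]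
    exact npc _ _ (by omega)
  · rw [if_neg h, if_neg h, mul_zero]

theorem final_thm (hn : 1 ≤ n) (G : DG n k) :
    ∑ S : Finset (Fin k), sigma G S = (-1) ^ k * alpha G Finset.univ := by
  have h1 : ∀ T : Finset (Fin k), sigma G T
      = ∑ S ∈ Finset.univ, (if S ⊆ T then (-1 : ℤ) ^ T.card * alpha G S else 0) := by
    intro T
    rw [sigma_eq_Dsum, Dsum, Finset.mul_sum, ← Finset.sum_filter]
    apply Finset.sum_congr ?_ (fun _ _ => rfl)
    ext S
    simp [Finset.mem_powerset]
  rw [Finset.sum_congr rfl (fun T _ => h1 T), Finset.sum_comm]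
  have h2 : ∀ S : Finset (Fin k),
      ∑ T ∈ Finset.univ, (if S ⊆ T then (-1 : ℤ) ^ T.card * alpha G S else 0)
      = (-1 : ℤ) ^ S.card * alpha G S * (if Sᶜ = (∅ : Finset (Fin k)) then 1 else 0) := by
    intro S
    rw [← Finset.sum_filter]
    have h3 : ∑ T ∈ Finset.univ.filter (fun T => S ⊆ T), ((-1 : ℤ) ^ T.card * alpha G S)
        = ∑ R ∈ Sᶜ.powerset, ((-1 : ℤ) ^ (S.card + R.card) * alpha G S) := by
      refine Finset.sum_nbij' (i := fun T => T \ S) (j := fun R => S ∪ R) ?_ ?_ ?_ ?_ ?_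
      · intro T hT
        rw [Finset.mem_powerset]
        intro x hx
        rw [Finset.mem_compl]
        exact (Finset.mem_sdiff.1 hx).2
      · intro R hR
        exact Finset.mem_filter.2 ⟨Finset.mem_univ _, Finset.subset_union_left⟩
      · intro T hT
        exact Finset.union_sdiff_of_subset (Finset.mem_filter.1 hT).2
      · intro R hR
        apply Finset.union_sdiff_cancel_left
        rw [Finset.mem_powerset] at hR
        exact Finset.disjoint_left.2 fun a haS haR => (Finset.mem_compl.1 (hR haR)) haS
      · intro T hT
        have hsub := (Finset.mem_filter.1 hT).2
        have hc : S.card + (T \ S).card = T.card := by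
          rw [add_comm]; exact Finset.card_sdiff_add_card_eq_card hsub
        rw [← hc]
    rw [h3]
    have h4 : ∑ R ∈ Sᶜ.powerset, ((-1 : ℤ) ^ (S.card + R.card) * alpha G S)
        = (-1 : ℤ) ^ S.card * alpha G S * ∑ R ∈ Sᶜ.powerset, (-1 : ℤ) ^ R.card := by
      rw [Finset.mul_sum]
      exact Finset.sum_congr rfl fun R _ => by rw [pow_add]; ring
    rw [h4, Finset.sum_powerset_neg_one_pow_card]
  rw [Finset.sum_congr rfl (fun S _ => h2 S)]
  rw [Finset.sum_eq_single Finset.univ]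
  · rw [Finset.compl_univ, if_pos rfl, mul_one, Finset.card_univ, Fintype.card_fin]
  · intro b _ hb
    rw [if_neg (fun hc => hb ((Finset.compl_eq_empty_iff b).1 hc)), mul_zero]
  · intro h
    exact absurd (Finset.mem_univ _) h

end DG


/-- For every directed graph `G` with `n` labeled vertices and `k`
labeled edges, `∑_{H ⊆ G} σ(H) = (−1)^k · α(G)`. -/
theorem sum_sigma_eq_alpha (n k : ℕ) (hn : 1 ≤ n) (G : DG n k) :
    ∑ S : Finset (Fin k), DG.sigma G S = (-1) ^ k * DG.alpha G Finset.univ := by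
  exact DG.final_thm hn G
end
end

section
/- (Matrix-tree theorem for diagonal minors of arbitrary codimension.) Let R be a commutative ring, W = (w_{ij}) an n×n matrix over R, and Ŵ its Laplace matrix. Let I ⊆ {1,…,n} have s elements, with s ≤ n. Then (n−s)! · det(M) = (−1)^{n−s} · ∑_{G ∈ AC_{n,n−s}^I} ∏_{[ab]∈G} w_{ab}, where M is the (n−s)×(n−s) submatrix of Ŵ obtained by deleting the rows and columns with indices in I, and the sum is over all acyclic directed graphs with n labeled vertices and n−s labeled edges whose set of sinks is exactly I. (Such graphs are exactly the s-component forests in which each component contains exactly one vertex of I and all edges of that component are directed towards it.) -/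
open Finset

open scoped Classical Nat

noncomputable section

/-- `Graph_{n,k}`: the vector space over `R` with basis `Γ_{n,k}`. -/
abbrev GS (R : Type*) [Semiring R] (n k : ℕ) := DG n k →₀ R

namespace DG

variable {R : Type*}

/-- Action of the operator `B_p` on a basis graph `G`: identity if the `p`-th edge is not a
loop, and `−∑_{b ≠ a} R_{ab;p} G` if it is the loop `[aa]`. -/
noncomputable def Bsingle [CommRing R] (n k : ℕ) (p : Fin k) (G : DG n k) : GS R n k :=
  if (G p).1 = (G p).2 then
    - ∑ b ∈ Finset.univ.filter (fun b => b ≠ (G p).1),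
        Finsupp.single (Function.update G p ((G p).1, b)) (1 : R)
  else Finsupp.single G 1

/-- The linear operator `B_p : Graph_{n,k} → Graph_{n,k}`. -/
noncomputable def B [CommRing R] (n k : ℕ) (p : Fin k) : GS R n k →ₗ[R] GS R n k :=
  Finsupp.lsum R fun G => LinearMap.toSpanSingleton R (GS R n k) (Bsingle n k p G)

/-- The Laplace operator `Δ = B_1 ⋯ B_k` (identity when `k = 0`). -/
noncomputable def Laplace [CommRing R] (n k : ℕ) : GS R n k →ₗ[R] GS R n k :=
  (List.ofFn fun p : Fin k => B (R := R) n k p).prod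

/-- `U(𝔅) = ∑_{G ∈ 𝔅} G`. -/
noncomputable def U (R : Type*) [CommRing R] (n k : ℕ) (P : DG n k → Prop) : GS R n k :=
  ∑ G : DG n k, if P G then Finsupp.single G (1 : R) else 0

/-- `X(𝔅) = ∑_{G ∈ 𝔅} (−1)^{β₀(G)} G`. -/
noncomputable def X (R : Type*) [CommRing R] (n k : ℕ) (P : DG n k → Prop) : GS R n k :=
  ∑ G : DG n k, if P G then Finsupp.single G ((-1 : R) ^ beta0 G Finset.univ) else 0

/-- `SSC_{n,k}^I`: strongly semiconnected graphs whose set of isolated vertices is exactly `I`. -/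
def SSCset (n k : ℕ) (I : Finset (Fin n)) : DG n k → Prop :=
  fun G => SSC G Finset.univ ∧ {v | isolated G v} = (I : Set (Fin n))

/-- `AC_{n,k}^I`: acyclic graphs whose set of sinks is exactly `I`. -/
def ACset (n k : ℕ) (I : Finset (Fin n)) : DG n k → Prop :=
  fun G => Acyclic G Finset.univ ∧ {v | isSink G v} = (I : Set (Fin n))

/-- The universal diagonal `I`-minor `det_{n,k}^I = ((−1)^k / k!) · X(SSC_{n,k}^I)`. -/
noncomputable def detI (R : Type*) [Field R] (n k : ℕ) (I : Finset (Fin n)) : GS R n k :=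
  (((-1 : R) ^ k) / (k ! : R)) • X R n k (SSCset n k I)

/-- The universal `(i,j)`-minor
`det_{n,k}^{i/j} = ((−1)^k / k!) · X({G : ([ij])*G ∈ SSC_{n,k+1}^∅})`. -/
noncomputable def detIJ (R : Type*) [Field R] (n k : ℕ) (i j : Fin n) : GS R n k :=
  (((-1 : R) ^ k) / (k ! : R)) •
    X R n k (fun G => SSCset n (k + 1) (∅ : Finset (Fin n)) (Fin.cons (i, j) G))

/-- The pairing `⟨W | G⟩ = ∏_{[ij] ∈ G} w_{ij}`, extended linearly to `Graph_{n,k}`. -/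
noncomputable def pair [CommRing R] {n k : ℕ} (W : Matrix (Fin n) (Fin n) R)
    (x : GS R n k) : R :=
  x.sum fun G c => c * ∏ e : Fin k, W (G e).1 (G e).2

/-- The Laplace matrix `Ŵ` of `W`: off-diagonal entries `w_{ij}`, diagonal entries
`−∑_{j ≠ i} w_{ij}`. -/
def lapMat [CommRing R] {n : ℕ} (W : Matrix (Fin n) (Fin n) R) : Matrix (Fin n) (Fin n) R :=
  Matrix.of fun i j =>
    if i = j then - ∑ l ∈ Finset.univ.filter (fun l => l ≠ i), W i l else W i j

end DG

namespace MTaux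

variable {R : Type*} [CommRing R] {n : ℕ}

abbrev V (I : Finset (Fin n)) := {x : Fin n // x ∉ I}

def rf (I : Finset (Fin n)) (f : V I → Fin n) (a b : V I) : Prop := f a = ↑b

def AcF (I : Finset (Fin n)) (f : V I → Fin n) : Prop :=
  ∀ a, ¬ Relation.TransGen (rf I f) a a

/-- The matrix `N - 1` where `N` is the partial-function matrix of `f`. -/
def EM (I : Finset (Fin n)) (f : V I → Fin n) : Matrix (V I) (V I) R :=
  Matrix.of fun a b => (if (b : Fin n) = f a then (1 : R) else 0) - (if b = a then 1 else 0)

theorem det_EM_of_acf (I : Finset (Fin n)) (f : V I → Fin n) (hf : AcF I f) :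
    (EM I f : Matrix (V I) (V I) R).det = (-1) ^ Fintype.card (V I) := by
  set rk : V I → ℕ := fun a => (univ.filter fun x => Relation.ReflTransGen (rf I f) x a).card
    with hrkdef
  have hrk : ∀ a b : V I, rf I f a b → rk a < rk b := by
    intro a b hab
    apply Finset.card_lt_card
    constructor
    · intro x hx
      simp only [Finset.mem_filter, Finset.mem_univ, true_and] at hx ⊢
      exact hx.tail hab
    · intro hsub
      have hb : b ∈ univ.filter fun x => Relation.ReflTransGen (rf I f) x b :=
        Finset.mem_filter.mpr ⟨Finset.mem_univ _, Relation.ReflTransGen.refl⟩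
      have := hsub hb
      simp only [Finset.mem_filter, Finset.mem_univ, true_and] at this
      exact hf b (Relation.TransGen.tail' this hab)
  have hbt : (EM I f : Matrix (V I) (V I) R).BlockTriangular rk := by
    intro a b hlt
    have h1 : ¬ ((b : Fin n) = f a) := by
      intro h
      exact absurd (hrk a b h.symm) (by omega)
    have h2 : b ≠ a := by rintro rfl; exact lt_irrefl _ hlt
    simp [EM, h1, h2]
  rw [hbt.det]
  have hblock : ∀ t ∈ (univ : Finset (V I)).image rk,
      ((EM I f : Matrix (V I) (V I) R).toSquareBlock rk t).det
        = (-1) ^ Fintype.card {a : V I // rk a = t} := by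
    intro t _
    have : ((EM I f : Matrix (V I) (V I) R).toSquareBlock rk t)
        = -(1 : Matrix {a : V I // rk a = t} {a : V I // rk a = t} R) := by
      ext a b
      have h1 : ¬ ((b.1 : Fin n) = f a.1) := by
        intro h
        have := hrk a.1 b.1 h.symm
        rw [a.2, b.2] at this
        exact lt_irrefl _ this
      have h2 : (b.1 = a.1) ↔ (a = b) := by
        constructor
        · intro h; exact Subtype.ext h.symm
        · intro h; rw [h]
      simp only [Matrix.toSquareBlock_def, EM, Matrix.of_apply, Matrix.neg_apply,
        Matrix.one_apply, h1, if_false]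
      rw [if_congr h2 rfl rfl]
      split <;> simp
    rw [this]
    rw [Matrix.det_neg, Matrix.det_one, mul_one]
  rw [Finset.prod_congr rfl hblock]
  rw [Finset.prod_pow_eq_pow_sum]
  congr 1
  have : ∀ t, Fintype.card {a : V I // rk a = t}
      = ((univ : Finset (V I)).filter fun a => rk a = t).card := fun t =>
    Fintype.card_subtype _
  rw [Finset.sum_congr rfl fun t _ => this t]
  rw [← Finset.card_eq_sum_card_image rk univ, Finset.card_univ]

/-- Determinism of `rf`. -/
theorem rf_det {I : Finset (Fin n)} {f : V I → Fin n} {a b c : V I}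
    (h1 : rf I f a b) (h2 : rf I f a c) : b = c :=
  Subtype.ext (by rw [rf] at h1 h2; rw [← h1, ← h2])

theorem det_EM_of_not_acf (I : Finset (Fin n)) (f : V I → Fin n) (hf : ¬ AcF I f) :
    (EM I f : Matrix (V I) (V I) R).det = 0 := by
  rw [AcF] at hf
  push_neg at hf
  obtain ⟨a0, ha0⟩ := hf
  set C : Finset (V I) := univ.filter fun x => Relation.TransGen (rf I f) x x with hCdef
  have hmemC : ∀ x : V I, x ∈ C ↔ Relation.TransGen (rf I f) x x := by
    intro x; simp [hCdef]
  have ha0C : a0 ∈ C := (hmemC a0).mpr ha0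
  -- successor function on C
  have hsucc : ∀ x : V I, x ∈ C → ∃ y : V I, y ∈ C ∧ rf I f x y := by
    intro x hx
    obtain ⟨y, hxy, hyx⟩ := Relation.TransGen.head'_iff.mp ((hmemC x).mp hx)
    exact ⟨y, (hmemC y).mpr (Relation.TransGen.tail' hyx hxy), hxy⟩
  set phi : {x // x ∈ C} → {x // x ∈ C} := fun x =>
    ⟨(hsucc x.1 x.2).choose, (hsucc x.1 x.2).choose_spec.1⟩ with hphidef
  have hphi_rf : ∀ x : {x // x ∈ C}, rf I f x.1 (phi x).1 := fun x =>
    (hsucc x.1 x.2).choose_spec.2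
  have hphi_eq : ∀ (x : {x // x ∈ C}) (y : V I), rf I f (x : V I) y → (phi x : V I) = y := by
    intro x y h
    exact rf_det (hphi_rf x) h
  have hsurj : Function.Surjective phi := by
    rintro ⟨b, hb⟩
    obtain ⟨x, hbx, hxb⟩ := Relation.TransGen.tail'_iff.mp ((hmemC b).mp hb)
    have hxC : x ∈ C := (hmemC x).mpr (Relation.TransGen.head' hxb hbx)
    exact ⟨⟨x, hxC⟩, Subtype.ext (hphi_eq ⟨x, hxC⟩ b hxb)⟩
  have hinj : Function.Injective phi := Finite.injective_iff_surjective.mpr hsurj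
  -- the rows indexed by C sum to zero
  have key : ∀ b : V I, (∑ a ∈ C, (EM I f : Matrix (V I) (V I) R) a b) = 0 := by
    intro b
    have hsplit : (∑ a ∈ C, (EM I f : Matrix (V I) (V I) R) a b)
        = (∑ a ∈ C, if (b : Fin n) = f a then (1 : R) else 0)
          - (∑ a ∈ C, if b = a then (1 : R) else 0) := by
      rw [← Finset.sum_sub_distrib]; rfl
    rw [hsplit]
    have h2 : (∑ a ∈ C, if b = a then (1 : R) else 0) = if b ∈ C then 1 else 0 := by
      simp [Finset.sum_ite_eq C b (fun _ => (1 : R))]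
    have h1 : (∑ a ∈ C, if (b : Fin n) = f a then (1 : R) else 0) = if b ∈ C then 1 else 0 := by
      by_cases hbC : b ∈ C
      · rw [if_pos hbC]
        rw [← Finset.sum_attach C (fun a => if (b : Fin n) = f a then (1 : R) else 0)]
        have hterm : ∀ x : {x // x ∈ C}, (if (b : Fin n) = f (x : V I) then (1 : R) else 0)
            = if x = (Equiv.ofBijective phi ⟨hinj, hsurj⟩).symm ⟨b, hbC⟩ then (1 : R) else 0 := by
          intro x
          apply if_congr _ rfl rfl
          rw [← Equiv.apply_eq_iff_eq_symm_apply]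
          constructor
          · intro h
            exact Subtype.ext (hphi_eq x b h.symm)
          · intro h
            have hx := hphi_rf x
            rw [rf] at hx
            rw [hx]
            have hco : ((Equiv.ofBijective phi ⟨hinj, hsurj⟩) x : V I) = (phi x : V I) := rfl
            rw [h] at hco
            exact congrArg Subtype.val hco
        rw [Finset.sum_congr rfl (fun x _ => hterm x)]
        rw [Finset.sum_ite_eq' C.attach _ (fun _ => (1 : R))]
        rw [if_pos (Finset.mem_attach _ _)]
      · rw [if_neg hbC]
        apply Finset.sum_eq_zero
        intro a haC
        rw [if_neg]
        intro h
        apply hbC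
        have hb' : (phi ⟨a, haC⟩ : V I) = b := hphi_eq ⟨a, haC⟩ b h.symm
        rw [← hb']
        exact (phi ⟨a, haC⟩).2
    rw [h1, h2, sub_self]
  -- conclude det = 0
  have h0 : (∑ k : V I, (if k ∈ C then (1:R) else 0) • (EM I f : Matrix (V I) (V I) R) k) = 0 := by
    have heach : ∀ k : V I, (if k ∈ C then (1:R) else 0) • (EM I f : Matrix (V I) (V I) R) k
        = if k ∈ C then (EM I f : Matrix (V I) (V I) R) k else 0 := by
      intro k; split <;> simp
    rw [Finset.sum_congr rfl (fun k _ => heach k)]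
    rw [Finset.sum_ite_mem univ C (fun k => ((EM I f : Matrix (V I) (V I) R) k : V I → R))]
    rw [Finset.univ_inter]
    funext b
    rw [Finset.sum_apply b C (fun k => ((EM I f : Matrix (V I) (V I) R) k : V I → R))]
    exact key b
  have := Matrix.det_updateRow_sum (EM I f : Matrix (V I) (V I) R) a0
    (fun k => if k ∈ C then (1:R) else 0)
  rw [h0, if_pos ha0C, one_smul] at this
  rw [← this]
  apply Matrix.det_eq_zero_of_row_eq_zero a0
  intro j
  rw [Matrix.updateRow_self]
  rfl


theorem det_sum_rows {m' : Type*} [Fintype m'] [DecidableEq m'] {α : Type*}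
    (A : m' → Finset α) (g : m' → α → m' → R) :
    Matrix.det (Matrix.of fun a b => ∑ l ∈ A a, g a l b)
      = ∑ r ∈ Fintype.piFinset A, Matrix.det (Matrix.of fun a b => g a (r a) b) := by
  have h1 : (Matrix.of fun a b => ∑ l ∈ A a, g a l b) = fun i => ∑ j ∈ A i, g i j := by
    funext a b
    rw [Finset.sum_apply]
    rfl
  unfold Matrix.det
  rw [← AlternatingMap.coe_multilinearMap (Matrix.detRowAlternating (R := R) (n := m'))]
  rw [h1]
  exact (Matrix.detRowAlternating (R := R) (n := m')).toMultilinearMap.map_sum_finset g A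

theorem detM_eq (I : Finset (Fin n)) (W : Matrix (Fin n) (Fin n) R) :
    (Matrix.of fun a b : {x : Fin n // x ∉ I} => DG.lapMat W a.1 b.1).det
      = (-1) ^ Fintype.card (V I) *
          ∑ f : V I → Fin n, if AcF I f then ∏ a : V I, W a.1 (f a) else 0 := by
  have hM : (Matrix.of fun a b : {x : Fin n // x ∉ I} => DG.lapMat W a.1 b.1)
      = Matrix.of fun a b : V I => ∑ l ∈ univ.filter (fun l => l ≠ (a : Fin n)),
          W a.1 l * ((if (b : Fin n) = l then (1:R) else 0) - if b = a then 1 else 0) := by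
    ext a b
    simp only [Matrix.of_apply, DG.lapMat]
    by_cases hab : (a : Fin n) = (b : Fin n)
    · rw [if_pos hab]
      have heq : ∀ l ∈ univ.filter (fun l => l ≠ (a : Fin n)),
          W a.1 l * ((if (b : Fin n) = l then (1:R) else 0) - if b = a then 1 else 0)
            = -(W a.1 l) := by
        intro l hl
        rw [Finset.mem_filter] at hl
        rw [if_neg (fun h => hl.2 (by rw [← h, ← hab])), if_pos (Subtype.ext hab).symm]
        ring
      rw [Finset.sum_congr rfl heq, ← Finset.sum_neg_distrib]
    · rw [if_neg hab]
      have hbna : b ≠ a := fun h => hab (congrArg Subtype.val h).symm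
      have heq : ∀ l ∈ univ.filter (fun l => l ≠ (a : Fin n)),
          W a.1 l * ((if (b : Fin n) = l then (1:R) else 0) - if b = a then 1 else 0)
            = if l = (b : Fin n) then W a.1 l else 0 := by
        intro l hl
        rw [if_neg hbna, sub_zero]
        by_cases hlb : l = (b : Fin n)
        · rw [if_pos hlb.symm, if_pos hlb, mul_one]
        · rw [if_neg (fun h => hlb h.symm), if_neg hlb, mul_zero]
      rw [Finset.sum_congr rfl heq, Finset.sum_ite_eq' _ (b : Fin n) (fun l => W a.1 l)]
      rw [if_pos]
      simp only [Finset.mem_filter, Finset.mem_univ, true_and]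
      exact fun h => hab (h.symm)
  rw [hM, det_sum_rows]
  have hterm : ∀ r ∈ Fintype.piFinset (fun a : V I => univ.filter (fun l => l ≠ (a : Fin n))),
      Matrix.det (Matrix.of fun a b : V I =>
          W a.1 (r a) * ((if (b : Fin n) = r a then (1:R) else 0) - if b = a then 1 else 0))
        = (if AcF I r then (-1) ^ Fintype.card (V I) * ∏ a : V I, W a.1 (r a) else 0) := by
    intro r _
    have h1 : Matrix.det (Matrix.of fun a b : V I =>
          W a.1 (r a) * ((if (b : Fin n) = r a then (1:R) else 0) - if b = a then 1 else 0))
        = (∏ a : V I, W a.1 (r a)) * (EM I r : Matrix (V I) (V I) R).det :=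
      Matrix.det_mul_column (fun a : V I => W a.1 (r a)) (EM I r)
    rw [h1]
    by_cases hac : AcF I r
    · rw [if_pos hac, det_EM_of_acf I r hac, mul_comm]
    · rw [if_neg hac, det_EM_of_not_acf I r hac, mul_zero]
  rw [Finset.sum_congr rfl hterm]
  rw [Finset.sum_subset (Finset.subset_univ _) ?van]
  case van =>
    intro r _ hr
    rw [Fintype.mem_piFinset] at hr
    push_neg at hr
    obtain ⟨a, ha⟩ := hr
    simp only [Finset.mem_filter, Finset.mem_univ, true_and, not_not] at ha
    rw [if_neg]
    intro hac
    exact hac a (Relation.TransGen.single (show rf I r a a from ha))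
  rw [Finset.mul_sum]
  apply Finset.sum_congr rfl
  intro r _
  rw [mul_ite, mul_zero]

/-- The graph attached to a labelling `π` and a function `f`. -/
def Phi (I : Finset (Fin n)) (k : ℕ) (p : (Fin k ≃ V I) × (V I → Fin n)) : DG n k :=
  fun e => (↑(p.1 e), p.2 (p.1 e))

theorem step_Phi (I : Finset (Fin n)) (k : ℕ) (p : (Fin k ≃ V I) × (V I → Fin n))
    (x y : Fin n) :
    DG.step (Phi I k p) Finset.univ x y ↔ ∃ hx : x ∉ I, p.2 ⟨x, hx⟩ = y := by
  constructor
  · rintro ⟨e, -, he⟩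
    have h1 : ((p.1 e : V I) : Fin n) = x := congrArg Prod.fst he
    have hx : x ∉ I := h1 ▸ (p.1 e).2
    refine ⟨hx, ?_⟩
    have : (⟨x, hx⟩ : V I) = p.1 e := Subtype.ext h1.symm
    rw [this]
    exact congrArg Prod.snd he
  · rintro ⟨hx, hy⟩
    refine ⟨p.1.symm ⟨x, hx⟩, Finset.mem_univ _, ?_⟩
    simp only [Phi, Equiv.apply_symm_apply]
    rw [hy]

theorem acset_Phi (I : Finset (Fin n)) (k : ℕ) (p : (Fin k ≃ V I) × (V I → Fin n))
    (hf : AcF I p.2) : DG.ACset n k I (Phi I k p) := by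
  constructor
  · -- acyclic
    intro x hcyc
    obtain ⟨y, hxy, -⟩ := Relation.TransGen.head'_iff.mp hcyc
    obtain ⟨hxI, -⟩ := (step_Phi I k p x y).mp hxy
    have lift : ∀ u v, Relation.TransGen (DG.step (Phi I k p) Finset.univ) u v →
        ∀ (hu : u ∉ I) (hv : v ∉ I), Relation.TransGen (rf I p.2) ⟨u, hu⟩ ⟨v, hv⟩ := by
      intro u v huv
      induction huv with
      | single h =>
        intro hu hv
        obtain ⟨hu', he⟩ := (step_Phi I k p _ _).mp h
        exact Relation.TransGen.single he
      | tail hab hbc ih =>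
        intro hu hv
        obtain ⟨hb, he⟩ := (step_Phi I k p _ _).mp hbc
        exact (ih hu hb).tail he
    exact hf ⟨x, hxI⟩ (lift x x hcyc hxI hxI)
  · -- sinks
    ext v
    simp only [Set.mem_setOf_eq, Finset.coe_mem, Finset.mem_coe]
    constructor
    · intro hs
      by_contra hv
      exact hs (p.1.symm ⟨v, hv⟩) (congrArg Subtype.val (p.1.apply_symm_apply ⟨v, hv⟩))
    · intro hv e h
      exact (p.1 e).2 (show ((p.1 e : V I) : Fin n) ∈ I by
        rw [show ((p.1 e : V I) : Fin n) = v from h]; exact hv)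

theorem sum_ac (I : Finset (Fin n)) (k : ℕ) (hk : Fintype.card (V I) = k)
    (W : Matrix (Fin n) (Fin n) R) :
    (∑ G : DG n k, if DG.ACset n k I G then ∏ e, W (G e).1 (G e).2 else 0)
      = (k ! : R) * ∑ f : V I → Fin n, if AcF I f then ∏ a : V I, W a.1 (f a) else 0 := by
  rw [← Finset.sum_filter, ← Finset.sum_filter]
  have hbij : (∑ p ∈ univ.filter (fun p : (Fin k ≃ V I) × (V I → Fin n) => AcF I p.2),
        ∏ a : V I, W a.1 (p.2 a))
      = ∑ G ∈ univ.filter (DG.ACset n k I), ∏ e, W (G e).1 (G e).2 := by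
    apply Finset.sum_bij (fun p _ => Phi I k p)
    · intro p hp
      rw [Finset.mem_filter] at hp ⊢
      exact ⟨Finset.mem_univ _, acset_Phi I k p hp.2⟩
    · intro p hp q hq hpq
      have hπ : p.1 = q.1 := by
        apply Equiv.ext
        intro e
        exact Subtype.ext (congrArg Prod.fst (congrFun hpq e))
      have hfeq : p.2 = q.2 := by
        funext a
        have := congrArg Prod.snd (congrFun hpq (p.1.symm a))
        simp only [Phi, Equiv.apply_symm_apply] at this
        rw [hπ] at this
        simpa [Equiv.apply_symm_apply] using this
      exact Prod.ext hπ hfeq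
    · -- surjective
      intro G hG
      rw [Finset.mem_filter] at hG
      obtain ⟨-, hGac, hGsink⟩ := hG
      have htl : ∀ e : Fin k, (G e).1 ∉ I := by
        intro e he
        have : DG.isSink G (G e).1 := by
          have := hGsink.symm ▸ (Finset.mem_coe.mpr he : (G e).1 ∈ (I : Set (Fin n)))
          exact this
        exact this e rfl
      set t : Fin k → V I := fun e => ⟨(G e).1, htl e⟩ with htdef
      have hts : Function.Surjective t := by
        intro v
        have hns : ¬ DG.isSink G v.1 := by
          intro hs
          have : v.1 ∈ (I : Set (Fin n)) := hGsink ▸ (Set.mem_setOf_eq ▸ hs)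
          exact v.2 this
        rw [DG.isSink] at hns
        push_neg at hns
        obtain ⟨e, he⟩ := hns
        exact ⟨e, Subtype.ext he⟩
      have htb : Function.Bijective t := by
        rw [Fintype.bijective_iff_surjective_and_card]
        exact ⟨hts, by rw [Fintype.card_fin, hk]⟩
      set π : Fin k ≃ V I := Equiv.ofBijective t htb with hπdef
      set f : V I → Fin n := fun a => (G (π.symm a)).2 with hfdef
      have hπt : ∀ e, π e = t e := fun e => rfl
      have hPhi : Phi I k (π, f) = G := by
        funext e
        show ((↑(π e) : Fin n), f (π e)) = G e
        have h1 : (↑(π e) : Fin n) = (G e).1 := rfl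
        have h2 : f (π e) = (G e).2 := by
          show (G (π.symm (π e))).2 = (G e).2
          rw [Equiv.symm_apply_apply]
        rw [h1, h2]
      have hAcf : AcF I f := by
        intro a ha
        apply hGac a.1
        have : ∀ x y : V I, Relation.TransGen (rf I f) x y →
            Relation.TransGen (DG.step G Finset.univ) x.1 y.1 := by
          intro x y h
          refine Relation.TransGen.lift Subtype.val ?_ x y h
          intro u v huv
          refine ⟨π.symm u, Finset.mem_univ _, ?_⟩
          have h1 : (G (π.symm u)).1 = u.1 := by
            have := hπt (π.symm u)
            have h2 : π (π.symm u) = u := Equiv.apply_symm_apply _ _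
            rw [this] at h2
            exact congrArg Subtype.val h2
          have h2 : (G (π.symm u)).2 = v.1 := huv
          rw [← h1, ← h2]
        exact this a a ha
      refine ⟨(π, f), Finset.mem_filter.mpr ⟨Finset.mem_univ _, hAcf⟩, hPhi⟩
    · -- values
      intro p hp
      show (∏ a : V I, W a.1 (p.2 a)) = ∏ e, W ((Phi I k p) e).1 ((Phi I k p) e).2
      rw [← Equiv.prod_comp p.1 (fun a : V I => W a.1 (p.2 a))]
      rfl
  rw [← hbij, Finset.sum_filter, Fintype.sum_prod_type]
  have hinner : ∀ x : Fin k ≃ V I,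
      (∑ y : V I → Fin n, if AcF I (x, y).2 then ∏ a : V I, W a.1 ((x, y).2 a) else 0)
        = ∑ f ∈ univ.filter (fun f : V I → Fin n => AcF I f), ∏ a : V I, W a.1 (f a) := by
    intro x
    rw [← Finset.sum_filter]
  rw [Finset.sum_congr rfl (fun x _ => hinner x), Finset.sum_const]
  have hcard : Fintype.card (Fin k ≃ V I) = k ! := by
    rw [Fintype.card_equiv (Fintype.equivFinOfCardEq hk).symm, Fintype.card_fin]
  rw [Finset.card_univ, hcard, nsmul_eq_mul]

end MTaux


/-- matrix-tree theorem for diagonal minors of arbitrary codimension.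
`(n−s)! · det M = (−1)^{n−s} · ∑_{G ∈ AC_{n,n−s}^I} ∏_{[ab]∈G} w_{ab}`, where `M` is the
submatrix of the Laplace matrix `Ŵ` with the rows and columns indexed by `I` deleted. -/
theorem matrix_tree_diag (R : Type*) [CommRing R] (n s : ℕ) (hs : s ≤ n)
    (I : Finset (Fin n)) (hI : I.card = s) (W : Matrix (Fin n) (Fin n) R) :
    ((n - s)! : R) *
        Matrix.det (Matrix.of fun a b : {x : Fin n // x ∉ I} => DG.lapMat W a.1 b.1)
      = (-1) ^ (n - s) *
          ∑ G : DG n (n - s),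
            if DG.ACset n (n - s) I G then ∏ e, W (G e).1 (G e).2 else 0 := by
  have hcard : Fintype.card (MTaux.V I) = n - s := by
    have h1 : Fintype.card {x : Fin n // x ∈ I} = s := by
      rw [Fintype.card_coe]; exact hI
    show Fintype.card {x : Fin n // ¬ x ∈ I} = n - s
    rw [Fintype.card_subtype_compl, h1, Fintype.card_fin]
  rw [MTaux.sum_ac I (n - s) hcard W, MTaux.detM_eq I W, hcard]
  ring
end
end

section
/- (Edge-reversal lemma.) Let G ∈ Γ_{n,k} be strongly connected (every ordered pair of vertices is joined by a directed path), and let e = [ab] ∈ G be an edge with a ≠ b such that the graph G∖e obtained by deleting e is still strongly connected. Let G_e^∨ denote G with the edge e reversed (replaced by [ba]). Then ∑_{H⊆G} α(H) + ∑_{H⊆G_e^∨} α(H) = 2·(−1)^k·σ(G); consequently ∑_{H⊆G} α(H) = (−1)^k σ(G) holds if and only if ∑_{H⊆G_e^∨} α(H) = (−1)^k σ(G_e^∨), noting σ(G_e^∨) = σ(G). -/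
open Finset

open scoped Classical Nat

noncomputable section

section Aux
open DG Relation
variable {n k : ℕ}

open DG Relation
variable {n k : ℕ}

lemma step_mono {G : DG n k} {S S' : Finset (Fin k)} (h : S ⊆ S') :
    ∀ {a b : Fin n}, step G S a b → step G S' a b := by
  rintro a b ⟨f, hf, hfe⟩; exact ⟨f, h hf, hfe⟩

lemma rtg_mono {G : DG n k} {S S' : Finset (Fin k)} (h : S ⊆ S') {a b : Fin n}
    (hr : ReflTransGen (step G S) a b) : ReflTransGen (step G S') a b :=
  ReflTransGen.mono (fun _ _ => step_mono h) _ _ hr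

lemma acyclic_mono {G : DG n k} {S S' : Finset (Fin k)} (h : S ⊆ S') (hA : Acyclic G S') :
    Acyclic G S := fun a hc => hA a (TransGen.mono (fun _ _ => step_mono h) _ _ hc)

lemma step_insert {G : DG n k} {g : Fin k} {T : Finset (Fin k)} {x y : Fin n} :
    step G (insert g T) x y ↔ step G T x y ∨ G g = (x, y) := by
  constructor
  · rintro ⟨f, hf, hfe⟩
    rcases Finset.mem_insert.mp hf with h | h
    · subst h; exact Or.inr hfe
    · exact Or.inl ⟨f, h, hfe⟩
  · rintro (⟨f, hf, hfe⟩ | h)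
    · exact ⟨f, Finset.mem_insert_of_mem hf, hfe⟩
    · exact ⟨g, Finset.mem_insert_self _ _, h⟩

lemma rtg_insert_cases {G : DG n k} {g : Fin k} {T : Finset (Fin k)} {x y : Fin n}
    (h : ReflTransGen (step G (insert g T)) x y) :
    ReflTransGen (step G T) x y ∨
      (ReflTransGen (step G T) x (G g).1 ∧ ReflTransGen (step G T) (G g).2 y) := by
  induction h with
  | refl => exact Or.inl .refl
  | @tail b c hxb hbc ih =>
    rcases step_insert.mp hbc with hs | he
    · rcases ih with h1 | ⟨h1, h2⟩
      · exact Or.inl (h1.tail hs)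
      · exact Or.inr ⟨h1, h2.tail hs⟩
    · have hb : (G g).1 = b := congrArg Prod.fst he
      have hc : (G g).2 = c := congrArg Prod.snd he
      rcases ih with h1 | ⟨h1, _⟩
      · refine Or.inr ⟨by rw [hb]; exact h1, by rw [hc]⟩
      · exact Or.inr ⟨h1, by rw [hc]⟩

lemma acyclic_insert {G : DG n k} {g : Fin k} {T : Finset (Fin k)} (hA : Acyclic G T)
    (hno : ¬ ReflTransGen (step G T) (G g).2 (G g).1) :
    Acyclic G (insert g T) := by
  intro x hx
  obtain ⟨b, hxb, hbx⟩ := Relation.TransGen.tail'_iff.mp hx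
  rcases step_insert.mp hbx with hs | he
  · rcases rtg_insert_cases hxb with h1 | ⟨h1, h2⟩
    · exact hA x (Relation.TransGen.tail' h1 hs)
    · exact hno ((h2.tail hs).trans h1)
  · have hb : (G g).1 = b := congrArg Prod.fst he
    have hx2 : (G g).2 = x := congrArg Prod.snd he
    rcases rtg_insert_cases hxb with h1 | ⟨_, h2⟩
    · exact hno (by rw [hb, hx2]; exact h1)
    · exact hno (by rw [hb]; exact h2)

lemma reach_insert_iff {G : DG n k} {g : Fin k} {T : Finset (Fin k)} {a v : Fin n}
    (hu : ¬ ReflTransGen (step G T) a (G g).1) :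
    ReflTransGen (step G (insert g T)) a v ↔ ReflTransGen (step G T) a v := by
  constructor
  · intro h
    rcases rtg_insert_cases h with h1 | ⟨h1, _⟩
    · exact h1
    · exact absurd h1 hu
  · exact rtg_mono (Finset.subset_insert _ _)

lemma reach_erase_iff {G : DG n k} {g : Fin k} {T : Finset (Fin k)} {a v : Fin n}
    (hu : ¬ ReflTransGen (step G T) a (G g).1) :
    ReflTransGen (step G (T.erase g)) a v ↔ ReflTransGen (step G T) a v := by
  constructor
  · exact rtg_mono (Finset.erase_subset _ _)
  · intro h
    induction h with
    | refl => exact .refl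
    | @tail b c hab hbc ih =>
      obtain ⟨f, hf, hfe⟩ := hbc
      rcases eq_or_ne f g with rfl | hfg
      · exact absurd (show ReflTransGen (step G T) a (G f).1 by
          rw [hfe]; exact hab) hu
      · exact ih.tail ⟨f, Finset.mem_erase.mpr ⟨hfg, hf⟩, hfe⟩

lemma exists_crossing {G : DG n k} {E : Finset (Fin k)} (P : Fin n → Prop) {u w : Fin n}
    (h : ReflTransGen (step G E) u w) (hu : ¬ P u) (hw : P w) :
    ∃ f ∈ E, ¬ P (G f).1 ∧ P (G f).2 := by
  revert hw
  induction h with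
  | refl => exact fun hw => absurd hw hu
  | @tail b c hab hbc ih =>
    intro hc
    by_cases hb : P b
    · exact ih hb
    · obtain ⟨f, hf, hfe⟩ := hbc
      exact ⟨f, hf, by rw [hfe]; exact hb, by rw [hfe]; exact hc⟩



def reachSet (G : DG n k) (T : Finset (Fin k)) (a : Fin n) : Finset (Fin n) :=
  univ.filter (fun v => ReflTransGen (step G T) a v)

lemma mem_reachSet {G : DG n k} {T : Finset (Fin k)} {a v : Fin n} :
    v ∈ reachSet G T a ↔ ReflTransGen (step G T) a v := by
  simp [reachSet]


lemma min'_congr {α : Type*} [LinearOrder α] {B C : Finset α} (h : B = C)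
    (hB : B.Nonempty) (hC : C.Nonempty) : B.min' hB = C.min' hC := by subst h; rfl

lemma sum_unreach_zero {G : DG n k} {E : Finset (Fin k)} {a : Fin n}
    (hE : StronglyConnected G E) (P : Finset (Fin n) → Prop)
    (hP : ∀ R, P R → R ≠ univ) :
    ∑ T ∈ E.powerset.filter (fun T => Acyclic G T ∧ P (reachSet G T a)),
      ((-1 : ℤ) ^ T.card) = 0 := by
  set cross : Finset (Fin k) → Finset (Fin k) := fun T =>
    E.filter (fun f => ¬ ReflTransGen (step G T) a (G f).1 ∧ ReflTransGen (step G T) a (G f).2)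
    with hcross
  have hne : ∀ T ∈ E.powerset.filter (fun T => Acyclic G T ∧ P (reachSet G T a)),
      (cross T).Nonempty := by
    intro T hT
    obtain ⟨hTE, hAc, hPT⟩ := by
      simpa [Finset.mem_filter, Finset.mem_powerset] using hT
    have hRne := hP _ hPT
    have : ∃ u, u ∉ reachSet G T a := by
      by_contra hcon
      push_neg at hcon
      exact hRne (Finset.eq_univ_iff_forall.mpr hcon)
    obtain ⟨u, hu⟩ := this
    rw [mem_reachSet] at hu
    obtain ⟨f, hf, h1, h2⟩ := exists_crossing (fun v => ReflTransGen (step G T) a v)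
      (hE u a) hu ReflTransGen.refl
    exact ⟨f, Finset.mem_filter.mpr ⟨hf, h1, h2⟩⟩
  refine Finset.sum_involution
    (fun T hT => if (cross T).min' (hne T hT) ∈ T
      then T.erase ((cross T).min' (hne T hT)) else insert ((cross T).min' (hne T hT)) T)
    ?_ ?_ ?_ ?_
  · -- sums cancel
    intro T hT
    set f := (cross T).min' (hne T hT) with hfdef
    by_cases hfT : f ∈ T
    · simp only [hfT, if_true]
      have h1 : (T.erase f).card + 1 = T.card := Finset.card_erase_add_one hfT
      rw [← h1, pow_succ]
      ring
    · simp only [hfT, if_false]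
      rw [Finset.card_insert_of_notMem hfT, pow_succ]
      ring
  · -- g_ne
    intro T hT _
    set f := (cross T).min' (hne T hT) with hfdef
    by_cases hfT : f ∈ T
    · simp only [hfT, if_true]
      exact fun hcon => (Finset.notMem_erase f T) (by rw [hcon]; exact hfT)
    · simp only [hfT, if_false]
      exact fun hcon => hfT (by rw [← hcon]; exact Finset.mem_insert_self f T)
  · -- g_mem
    intro T hT
    set f := (cross T).min' (hne T hT) with hfdef
    have hfc : f ∈ cross T := Finset.min'_mem _ _
    rw [hcross, Finset.mem_filter] at hfc
    obtain ⟨hfE, hnr, hr⟩ := hfc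
    obtain ⟨hTE, hAc, hPT⟩ := by
      simpa [Finset.mem_filter, Finset.mem_powerset] using hT
    by_cases hfT : f ∈ T
    · simp only [hfT, if_true]
      have hRS : reachSet G (T.erase f) a = reachSet G T a := by
        ext v; rw [mem_reachSet, mem_reachSet, reach_erase_iff hnr]
      refine Finset.mem_filter.mpr ⟨Finset.mem_powerset.mpr
        ((Finset.erase_subset _ _).trans hTE), acyclic_mono (Finset.erase_subset _ _) hAc, ?_⟩
      rw [hRS]; exact hPT
    · simp only [hfT, if_false]
      have hRS : reachSet G (insert f T) a = reachSet G T a := by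
        ext v; rw [mem_reachSet, mem_reachSet, reach_insert_iff hnr]
      have hno : ¬ ReflTransGen (step G T) (G f).2 (G f).1 := fun hcon => hnr (hr.trans hcon)
      refine Finset.mem_filter.mpr ⟨Finset.mem_powerset.mpr
        (Finset.insert_subset hfE hTE), acyclic_insert hAc hno, ?_⟩
      rw [hRS]; exact hPT
  · -- g_inv
    intro T hT
    set f := (cross T).min' (hne T hT) with hfdef
    have hfc : f ∈ cross T := Finset.min'_mem _ _
    rw [hcross, Finset.mem_filter] at hfc
    obtain ⟨hfE, hnr, hr⟩ := hfc
    by_cases hfT : f ∈ T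
    · suffices H : ∀ X, X = T.erase f → ∀ h1 : (cross X).Nonempty,
          (if (cross X).min' h1 ∈ X then X.erase ((cross X).min' h1)
            else insert ((cross X).min' h1) X) = T from H _ (if_pos hfT) _
      intro X hX _
      subst hX
      have hcc : cross (T.erase f) = cross T := by
        rw [hcross]
        apply Finset.filter_congr
        intro g _
        rw [reach_erase_iff hnr, reach_erase_iff hnr]
      have hmin : ∀ (h1 : (cross (T.erase f)).Nonempty),
          (cross (T.erase f)).min' h1 = f := fun h1 =>
        (min'_congr hcc h1 (hne T hT)).trans hfdef.symm
      simp only [hmin, Finset.notMem_erase, if_false, Finset.insert_erase hfT]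
    · suffices H : ∀ X, X = insert f T → ∀ h1 : (cross X).Nonempty,
          (if (cross X).min' h1 ∈ X then X.erase ((cross X).min' h1)
            else insert ((cross X).min' h1) X) = T from H _ (if_neg hfT) _
      intro X hX _
      subst hX
      have hcc : cross (insert f T) = cross T := by
        rw [hcross]
        apply Finset.filter_congr
        intro g _
        rw [reach_insert_iff hnr, reach_insert_iff hnr]
      have hmin : ∀ (h1 : (cross (insert f T)).Nonempty),
          (cross (insert f T)).min' h1 = f := fun h1 =>
        (min'_congr hcc h1 (hne T hT)).trans hfdef.symm
      simp only [hmin, Finset.mem_insert_self, if_true, Finset.erase_insert hfT]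



lemma reach_univ_iff {G : DG n k} {T : Finset (Fin k)} {a : Fin n} (hA : Acyclic G T) :
    reachSet G T a = univ ↔
      ((∀ f ∈ T, (G f).2 ≠ a) ∧ (∀ v, v ≠ a → ∃ f ∈ T, (G f).2 = v)) := by
  constructor
  · intro h
    refine ⟨?_, ?_⟩
    · intro f hf heq
      have h1 : ReflTransGen (step G T) a (G f).1 := by
        rw [← mem_reachSet, h]; exact Finset.mem_univ _
      exact hA a (Relation.TransGen.tail' h1 ⟨f, hf, Prod.ext rfl heq⟩)
    · intro v hv
      have h1 : ReflTransGen (step G T) a v := by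
        rw [← mem_reachSet, h]; exact Finset.mem_univ _
      rcases h1.cases_tail with h2 | ⟨c, _, f, hf, hfe⟩
      · exact absurd h2 hv
      · exact ⟨f, hf, congrArg Prod.snd hfe⟩
  · rintro ⟨h1, h2⟩
    apply Finset.eq_univ_iff_forall.mpr
    intro v
    rw [mem_reachSet]
    by_contra hv0
    have hstep : ∀ v : Fin n, ¬ ReflTransGen (step G T) a v →
        ∃ u, ¬ ReflTransGen (step G T) a u ∧ step G T u v := by
      intro v hv
      have hva : v ≠ a := fun h => hv (h ▸ ReflTransGen.refl)
      obtain ⟨f, hf, hfv⟩ := h2 v hva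
      have hs : step G T (G f).1 v := ⟨f, hf, Prod.ext rfl hfv⟩
      exact ⟨(G f).1, fun hr => hv (hr.tail hs), hs⟩
    have hch : ∀ q : {v : Fin n // ¬ ReflTransGen (step G T) a v},
        ∃ q' : {v : Fin n // ¬ ReflTransGen (step G T) a v}, step G T q'.1 q.1 := by
      intro q
      obtain ⟨u, hu, hs⟩ := hstep q.1 q.2
      exact ⟨⟨u, hu⟩, hs⟩
    choose nxt hnxt using hch
    set seq : ℕ → {v : Fin n // ¬ ReflTransGen (step G T) a v} :=
      fun t => nxt^[t] ⟨v, hv0⟩ with hseq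
    have hseqstep : ∀ t, step G T (seq (t+1)).1 (seq t).1 := by
      intro t
      have h : seq (t+1) = nxt (seq t) := Function.iterate_succ_apply' nxt t _
      rw [h]; exact hnxt _
    have htg : ∀ t d, Relation.TransGen (step G T) (seq (t + d + 1)).1 (seq t).1 := by
      intro t d
      induction d with
      | zero => exact .single (hseqstep t)
      | succ d ih => exact Relation.TransGen.head (hseqstep (t + d + 1)) ih
    obtain ⟨i, j, hij, hs⟩ := Finite.exists_ne_map_eq_of_infinite seq
    rcases Nat.lt_or_ge i j with hlt | hge
    · have hj : j = i + (j - i - 1) + 1 := by omega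
      have h := htg i (j - i - 1)
      rw [← hj, ← hs] at h
      exact hA _ h
    · have hik : i = j + (i - j - 1) + 1 := by omega
      have h := htg j (i - j - 1)
      rw [← hik, hs] at h
      exact hA _ h


def reachIn (G : DG n k) (E : Finset (Fin k)) (a : Fin n) : ℕ → Fin n → Prop
  | 0 => fun v => v = a
  | (t+1) => fun v => reachIn G E a t v ∨ ∃ f ∈ E, (G f).2 = v ∧ reachIn G E a t (G f).1

lemma reachIn_exists {G : DG n k} {E : Finset (Fin k)} {a : Fin n}
    (hE : StronglyConnected G E) (v : Fin n) : ∃ t, reachIn G E a t v := by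
  have h := hE a v
  induction h with
  | refl => exact ⟨0, rfl⟩
  | @tail b c hab hbc ih =>
    obtain ⟨t, ht⟩ := ih
    obtain ⟨f, hf, hfe⟩ := hbc
    refine ⟨t + 1, Or.inr ⟨f, hf, congrArg Prod.snd hfe, ?_⟩⟩
    rw [show (G f).1 = b from congrArg Prod.fst hfe]
    exact ht

def distTo (G : DG n k) (E : Finset (Fin k)) (a : Fin n)
    (hE : StronglyConnected G E) (v : Fin n) : ℕ :=
  Nat.find (reachIn_exists (a := a) hE v)

lemma distTo_spec {G : DG n k} {E : Finset (Fin k)} {a : Fin n}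
    (hE : StronglyConnected G E) (v : Fin n) :
    reachIn G E a (distTo G E a hE v) v := Nat.find_spec (reachIn_exists (a := a) hE v)

lemma distTo_min {G : DG n k} {E : Finset (Fin k)} {a : Fin n}
    (hE : StronglyConnected G E) {v : Fin n} {t : ℕ} (h : reachIn G E a t v) :
    distTo G E a hE v ≤ t := Nat.find_min' (reachIn_exists (a := a) hE v) h

lemma cEdge_exists {G : DG n k} {E : Finset (Fin k)} {a : Fin n}
    (hE : StronglyConnected G E) {v : Fin n} (hv : v ≠ a) :
    ∃ f, f ∈ E ∧ (G f).2 = v ∧ distTo G E a hE (G f).1 < distTo G E a hE v := by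
  have hs := distTo_spec (a := a) hE v
  cases hd : distTo G E a hE v with
  | zero =>
    rw [hd] at hs
    exact absurd hs hv
  | succ t =>
    rw [hd] at hs
    rcases hs with h | ⟨f, hf, hfv, hft⟩
    · have := distTo_min (a := a) hE h
      omega
    · refine ⟨f, hf, hfv, ?_⟩
      have := distTo_min (a := a) hE hft
      omega

def cEdge (G : DG n k) (E : Finset (Fin k)) (a : Fin n)
    (hE : StronglyConnected G E) (f0 : Fin k) (v : Fin n) : Fin k :=
  if h : v = a then f0 else (cEdge_exists hE h).choose

lemma cEdge_spec {G : DG n k} {E : Finset (Fin k)} {a : Fin n}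
    (hE : StronglyConnected G E) (f0 : Fin k) {v : Fin n} (hv : v ≠ a) :
    cEdge G E a hE f0 v ∈ E ∧ (G (cEdge G E a hE f0 v)).2 = v ∧
      distTo G E a hE (G (cEdge G E a hE f0 v)).1 < distTo G E a hE v := by
  rw [cEdge, dif_neg hv]
  exact (cEdge_exists hE hv).choose_spec

def ordv (G : DG n k) (E : Finset (Fin k)) (a : Fin n)
    (hE : StronglyConnected G E) (v : Fin n) : ℕ :=
  distTo G E a hE v * n + v.val

lemma ordv_inj {G : DG n k} {E : Finset (Fin k)} {a : Fin n}
    (hE : StronglyConnected G E) {u v : Fin n}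
    (h : ordv G E a hE u = ordv G E a hE v) : u = v := by
  have hu := u.isLt
  have hv := v.isLt
  rw [ordv, ordv] at h
  have : u.val = v.val := by
    rcases Nat.lt_trichotomy (distTo G E a hE u) (distTo G E a hE v) with h1 | h1 | h1
    · nlinarith
    · rw [h1] at h; omega
    · nlinarith
  exact Fin.ext this

lemma ordv_c_lt {G : DG n k} {E : Finset (Fin k)} {a : Fin n}
    (hE : StronglyConnected G E) (f0 : Fin k) {v : Fin n} (hv : v ≠ a) :
    ordv G E a hE (G (cEdge G E a hE f0 v)).1 < ordv G E a hE v := by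
  obtain ⟨-, -, hlt⟩ := cEdge_spec hE f0 hv
  have h1 := ((G (cEdge G E a hE f0 v)).1).isLt
  rw [ordv, ordv]
  nlinarith

lemma acyclic_of_measure {G : DG n k} {T : Finset (Fin k)} (m : Fin n → ℕ)
    (h : ∀ x y, step G T x y → m x < m y) : Acyclic G T := by
  intro x hx
  have key : ∀ {x y : Fin n}, Relation.TransGen (step G T) x y → m x < m y := by
    intro x y h'
    induction h' with
    | single hs => exact h _ _ hs
    | tail _ hs ih => exact ih.trans (h _ _ hs)
  exact absurd (key hx) (lt_irrefl _)

lemma claimC {G : DG n k} {T : Finset (Fin k)} {a : Fin n} (m : Fin n → ℕ) (W : ℕ)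
    (hT1 : ∀ f ∈ T, (G f).2 ≠ a)
    (c : Fin n → Fin k)
    (hgood : ∀ v, v ≠ a → m v < W → ∀ f ∈ T, (G f).2 = v → f = c v)
    (hc : ∀ v, v ≠ a → (G (c v)).2 = v ∧ m (G (c v)).1 < m v)
    {x y : Fin n} (hxy : ReflTransGen (step G T) x y) (hy : m y < W) :
    x = y ∨ m x < m y := by
  revert hy
  induction hxy with
  | refl => exact fun _ => Or.inl rfl
  | @tail b z hab hbz ih =>
    intro hz
    obtain ⟨f, hf, hfe⟩ := hbz
    have hhead : (G f).2 = z := congrArg Prod.snd hfe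
    have hza : z ≠ a := hhead ▸ hT1 f hf
    have hfc : f = c z := hgood z hza hz f hf hhead
    have hbz1 : b = (G (c z)).1 := by rw [← hfc, hfe]
    have hmb : m b < m z := by rw [hbz1]; exact (hc z hza).2
    rcases ih (hmb.trans hz) with h | h
    · exact Or.inr (h ▸ hmb)
    · exact Or.inr (h.trans hmb)


def inS (G : DG n k) (T : Finset (Fin k)) (v : Fin n) : Finset (Fin k) :=
  T.filter (fun f => (G f).2 = v)

lemma mem_inS {G : DG n k} {T : Finset (Fin k)} {v : Fin n} {f : Fin k} :
    f ∈ inS G T v ↔ f ∈ T ∧ (G f).2 = v := Finset.mem_filter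

lemma inS_erase {G : DG n k} (T : Finset (Fin k)) (g : Fin k) (v : Fin n) :
    inS G (T.erase g) v = (inS G T v).erase g := Finset.filter_erase _ _ _

lemma inS_insert_ne {G : DG n k} {T : Finset (Fin k)} {g : Fin k} {v : Fin n}
    (h : (G g).2 ≠ v) : inS G (insert g T) v = inS G T v := by
  rw [inS, Finset.filter_insert, if_neg h]; rfl

lemma inS_insert_eq {G : DG n k} {T : Finset (Fin k)} {g : Fin k} {v : Fin n}
    (h : (G g).2 = v) : inS G (insert g T) v = insert g (inS G T v) := by
  rw [inS, Finset.filter_insert, if_pos h]; rfl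

lemma sum_M_eq {G : DG n k} {E : Finset (Fin k)} {a b0 : Fin n} (hne0 : a ≠ b0)
    (hE : StronglyConnected G E) :
    ∑ T ∈ E.powerset.filter (fun T => Acyclic G T ∧ (∀ f ∈ T, (G f).2 ≠ a) ∧
        (∀ v, v ≠ a → ∃ f ∈ T, (G f).2 = v)), ((-1 : ℤ)) ^ T.card = (-1) ^ (n + 1) := by
  have hex : ∃ f, f ∈ E := by
    rcases (hE a b0).cases_tail with h | ⟨c', _, f, hf, _⟩
    · exact absurd h.symm hne0
    · exact ⟨f, hf⟩
  set c : Fin n → Fin k := cEdge G E a hE hex.choose with hc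
  set ord : Fin n → ℕ := ordv G E a hE with hord
  have hcspec : ∀ {v : Fin n}, v ≠ a → c v ∈ E ∧ (G (c v)).2 = v := by
    intro v hv
    obtain ⟨h1, h2, _⟩ := cEdge_spec hE hex.choose hv
    exact ⟨h1, h2⟩
  have hclt : ∀ {v : Fin n}, v ≠ a → ord (G (c v)).1 < ord v :=
    fun hv => ordv_c_lt hE hex.choose hv
  set T0 : Finset (Fin k) := (univ.erase a).image c with hT0
  set Mset := E.powerset.filter (fun T => Acyclic G T ∧ (∀ f ∈ T, (G f).2 ≠ a) ∧
      (∀ v, v ≠ a → ∃ f ∈ T, (G f).2 = v)) with hMset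
  have hmemM : ∀ {T}, T ∈ Mset ↔ (T ⊆ E ∧ (Acyclic G T ∧ (∀ f ∈ T, (G f).2 ≠ a) ∧
      (∀ v, v ≠ a → ∃ f ∈ T, (G f).2 = v))) := by
    intro T
    rw [hMset, Finset.mem_filter, Finset.mem_powerset]
  have hmemT0 : ∀ {f}, f ∈ T0 ↔ ∃ v, v ≠ a ∧ c v = f := by
    intro f
    rw [hT0]
    constructor
    · intro hf
      obtain ⟨v, hv, hcv⟩ := Finset.mem_image.mp hf
      exact ⟨v, (Finset.mem_erase.mp hv).1, hcv⟩
    · rintro ⟨v, hv, hcv⟩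
      exact Finset.mem_image.mpr ⟨v, Finset.mem_erase.mpr ⟨hv, Finset.mem_univ _⟩, hcv⟩
  have hT0in : ∀ {v}, v ≠ a → inS G T0 v = {c v} := by
    intro v hv
    ext f
    rw [mem_inS, Finset.mem_singleton]
    constructor
    · rintro ⟨hf, hhead⟩
      obtain ⟨u, hu, hcu⟩ := hmemT0.mp hf
      rw [← hcu, (hcspec hu).2] at hhead
      rw [← hcu, hhead]
    · rintro rfl
      exact ⟨hmemT0.mpr ⟨v, hv, rfl⟩, (hcspec hv).2⟩
  have hT0mem : T0 ∈ Mset := by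
    refine hmemM.mpr ⟨?_, ?_, ?_, ?_⟩
    · intro f hf
      obtain ⟨v, hv, hcv⟩ := hmemT0.mp hf
      rw [← hcv]; exact (hcspec hv).1
    · refine acyclic_of_measure ord ?_
      rintro x y ⟨f, hf, hfe⟩
      obtain ⟨v, hv, hcv⟩ := hmemT0.mp hf
      have hy : v = y := by
        have h2 : (G f).2 = y := congrArg Prod.snd hfe
        rw [← hcv, (hcspec hv).2] at h2
        exact h2
      have hx : (G f).1 = x := congrArg Prod.fst hfe
      rw [← hy, ← hx, ← hcv]
      exact hclt hv
    · intro f hf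
      obtain ⟨v, hv, hcv⟩ := hmemT0.mp hf
      rw [← hcv, (hcspec hv).2]; exact hv
    · intro v hv
      exact ⟨c v, hmemT0.mpr ⟨v, hv, rfl⟩, (hcspec hv).2⟩
  have hT0card : T0.card = n - 1 := by
    rw [hT0, Finset.card_image_of_injOn, Finset.card_erase_of_mem (Finset.mem_univ a),
      Finset.card_univ, Fintype.card_fin]
    intro u hu v hv hcc
    have hu' := (Finset.mem_erase.mp (Finset.mem_coe.mp hu)).1
    have hv' := (Finset.mem_erase.mp (Finset.mem_coe.mp hv)).1
    rw [← (hcspec hu').2, ← (hcspec hv').2, hcc]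
  set wsel : Finset (Fin n) → Fin n := fun B =>
    if h : B.Nonempty then (Finset.exists_min_image B ord h).choose else a with hwsel
  have hwsel_spec : ∀ {B : Finset (Fin n)}, B.Nonempty →
      wsel B ∈ B ∧ ∀ v ∈ B, ord (wsel B) ≤ ord v := by
    intro B hB
    rw [hwsel]
    simp only [dif_pos hB]
    obtain ⟨h1, h2⟩ := (Finset.exists_min_image B ord hB).choose_spec
    exact ⟨h1, h2⟩
  set Bset : Finset (Fin k) → Finset (Fin n) :=
    fun T => (univ.erase a).filter (fun v => inS G T v ≠ {c v}) with hBset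
  have hmemB : ∀ {T : Finset (Fin k)} {v : Fin n},
      v ∈ Bset T ↔ (v ≠ a ∧ inS G T v ≠ {c v}) := by
    intro T v
    rw [hBset]
    constructor
    · intro h
      obtain ⟨h1, h2⟩ := Finset.mem_filter.mp h
      exact ⟨(Finset.mem_erase.mp h1).1, h2⟩
    · rintro ⟨h1, h2⟩
      exact Finset.mem_filter.mpr ⟨Finset.mem_erase.mpr ⟨h1, Finset.mem_univ _⟩, h2⟩
  have hBT0 : Bset T0 = ∅ := by
    rw [Finset.eq_empty_iff_forall_notMem]
    intro v hv
    obtain ⟨h1, h2⟩ := hmemB.mp hv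
    exact h2 (hT0in h1)
  have hBne : ∀ {T}, T ∈ Mset → T ≠ T0 → (Bset T).Nonempty := by
    intro T hT hTne
    obtain ⟨hTE, hAc, hC1, hC2⟩ := hmemM.mp hT
    by_contra hcon
    rw [Finset.not_nonempty_iff_eq_empty] at hcon
    have hall : ∀ v, v ≠ a → inS G T v = {c v} := by
      intro v hv
      by_contra hbad
      have : v ∈ Bset T := hmemB.mpr ⟨hv, hbad⟩
      rw [hcon] at this
      exact absurd this (Finset.notMem_empty _)
    apply hTne
    ext f
    constructor
    · intro hf
      have hfa := hC1 f hf
      have hmem : f ∈ inS G T (G f).2 := mem_inS.mpr ⟨hf, rfl⟩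
      rw [hall _ hfa, Finset.mem_singleton] at hmem
      rw [hmem]
      exact hmemT0.mpr ⟨(G f).2, hfa, rfl⟩
    · intro hf
      obtain ⟨v, hv, hcv⟩ := hmemT0.mp hf
      have hmem : c v ∈ inS G T v := by
        rw [hall v hv]; exact Finset.mem_singleton_self _
      rw [hcv] at hmem
      exact (mem_inS.mp hmem).1
  -- the key toggling fact
  have hkey : ∀ T ∈ Mset.erase T0,
      (c (wsel (Bset T)) ∈ T →
        T.erase (c (wsel (Bset T))) ∈ Mset.erase T0 ∧
          Bset (T.erase (c (wsel (Bset T)))) = Bset T) ∧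
      (c (wsel (Bset T)) ∉ T →
        insert (c (wsel (Bset T))) T ∈ Mset.erase T0 ∧
          Bset (insert (c (wsel (Bset T))) T) = Bset T) := by
    intro T hT
    obtain ⟨hTne, hTM⟩ := Finset.mem_erase.mp hT
    obtain ⟨hTE, hAc, hC1, hC2⟩ := hmemM.mp hTM
    have hBneT := hBne hTM hTne
    obtain ⟨hwB, hwmin⟩ := hwsel_spec hBneT
    set w := wsel (Bset T) with hw
    obtain ⟨hwa, hwbad⟩ := hmemB.mp hwB
    set g := c w with hg
    have hgE : g ∈ E := (hcspec hwa).1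
    have hghead : (G g).2 = w := (hcspec hwa).2
    have hgood : ∀ v, v ≠ a → ord v < ord w → inS G T v = {c v} := by
      intro v hv hvw
      by_contra hbad
      have hvB : v ∈ Bset T := hmemB.mpr ⟨hv, hbad⟩
      exact absurd (hwmin v hvB) (by omega)
    constructor
    · -- erase case
      intro hgT
      have hgin : g ∈ inS G T w := mem_inS.mpr ⟨hgT, hghead⟩
      have hf' : ∃ f' ∈ inS G T w, f' ≠ g := by
        by_contra hcon
        push_neg at hcon
        exact hwbad (Finset.eq_singleton_iff_unique_mem.mpr ⟨hgin, hcon⟩)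
      obtain ⟨f', hf'in, hf'ne⟩ := hf'
      have hBeq : Bset (T.erase g) = Bset T := by
        ext v
        rw [hmemB, hmemB]
        rcases eq_or_ne v w with rfl | hvw
        · constructor
          · intro h; exact ⟨h.1, hwbad⟩
          · intro h
            refine ⟨h.1, fun hcon => ?_⟩
            rw [inS_erase] at hcon
            have hgm : g ∈ (inS G T w).erase g := by
              rw [hcon, hg]; exact Finset.mem_singleton_self _
            exact Finset.notMem_erase _ _ hgm
        · have hsame : inS G (T.erase g) v = inS G T v := by
            rw [inS_erase]
            apply Finset.erase_eq_of_notMem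
            intro hgm
            exact hvw (by rw [← hghead]; exact ((mem_inS.mp hgm).2).symm)
          rw [hsame]
      refine ⟨Finset.mem_erase.mpr ⟨?_, hmemM.mpr ⟨?_, ?_, ?_, ?_⟩⟩, hBeq⟩
      · intro hcon
        rw [hcon, hBT0] at hBeq
        rw [← hBeq] at hBneT
        exact Finset.not_nonempty_empty hBneT
      · exact (Finset.erase_subset _ _).trans hTE
      · exact acyclic_mono (Finset.erase_subset _ _) hAc
      · intro f hf; exact hC1 f (Finset.mem_of_mem_erase hf)
      · intro v hv
        rcases eq_or_ne v w with rfl | hvw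
        · exact ⟨f', Finset.mem_erase.mpr ⟨hf'ne, (mem_inS.mp hf'in).1⟩,
            (mem_inS.mp hf'in).2⟩
        · obtain ⟨f, hf, hfv⟩ := hC2 v hv
          have hfg : f ≠ g := fun h => hvw (by rw [← hfv, h, hghead])
          exact ⟨f, Finset.mem_erase.mpr ⟨hfg, hf⟩, hfv⟩
    · -- insert case
      intro hgT
      have hno : ¬ ReflTransGen (step G T) (G g).2 (G g).1 := by
        intro hcon
        rw [hghead] at hcon
        have hylt : ord (G g).1 < ord w := hclt hwa
        have hcc := claimC (G := G) (T := T) (a := a) ord (ord w) hC1 c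
          (fun v hv hvw f hf hfv => by
            have hm : f ∈ inS G T v := mem_inS.mpr ⟨hf, hfv⟩
            rw [hgood v hv hvw] at hm
            exact Finset.mem_singleton.mp hm)
          (fun v hv => ⟨(hcspec hv).2, hclt hv⟩)
          hcon hylt
        rcases hcc with h | h
        · rw [← h] at hylt; omega
        · omega
      have hAc' : Acyclic G (insert g T) := acyclic_insert hAc hno
      have hBeq : Bset (insert g T) = Bset T := by
        ext v
        rw [hmemB, hmemB]
        rcases eq_or_ne v w with rfl | hvw
        · constructor
          · intro h; exact ⟨h.1, hwbad⟩
          · intro h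
            refine ⟨h.1, fun hcon => ?_⟩
            rw [inS_insert_eq hghead] at hcon
            obtain ⟨f1, hf1m, hf1v⟩ := hC2 w h.1
            have hf1 : f1 ∈ inS G T w := mem_inS.mpr ⟨hf1m, hf1v⟩
            have hf1' : f1 ∈ insert g (inS G T w) := Finset.mem_insert_of_mem hf1
            rw [hcon, Finset.mem_singleton] at hf1'
            rw [← hg] at hf1'
            rw [hf1'] at hf1
            exact hgT (mem_inS.mp hf1).1
        · have hsame : inS G (insert g T) v = inS G T v :=
            inS_insert_ne (by rw [hghead]; exact hvw.symm)
          rw [hsame]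
      refine ⟨Finset.mem_erase.mpr ⟨?_, hmemM.mpr ⟨?_, ?_, ?_, ?_⟩⟩, hBeq⟩
      · intro hcon
        rw [hcon, hBT0] at hBeq
        rw [← hBeq] at hBneT
        exact Finset.not_nonempty_empty hBneT
      · exact Finset.insert_subset hgE hTE
      · exact hAc'
      · intro f hf
        rcases Finset.mem_insert.mp hf with rfl | hf'
        · rw [hghead]; exact hwa
        · exact hC1 f hf'
      · intro v hv
        obtain ⟨f, hf, hfv⟩ := hC2 v hv
        exact ⟨f, Finset.mem_insert_of_mem hf, hfv⟩
  -- assemble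
  rw [← Finset.add_sum_erase _ _ hT0mem]
  have hzero : ∑ T ∈ Mset.erase T0, ((-1 : ℤ)) ^ T.card = 0 := by
    refine Finset.sum_involution
      (fun T _ => if c (wsel (Bset T)) ∈ T
        then T.erase (c (wsel (Bset T))) else insert (c (wsel (Bset T))) T)
      ?_ ?_ ?_ ?_
    · intro T hT
      by_cases hgT : c (wsel (Bset T)) ∈ T
      · simp only [hgT, if_true]
        rw [← Finset.card_erase_add_one hgT, pow_succ]
        ring
      · simp only [hgT, if_false]
        rw [Finset.card_insert_of_notMem hgT, pow_succ]
        ring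
    · intro T hT _
      by_cases hgT : c (wsel (Bset T)) ∈ T
      · simp only [hgT, if_true]
        exact fun hcon => Finset.notMem_erase _ _ (by rw [hcon]; exact hgT)
      · simp only [hgT, if_false]
        exact fun hcon => by
          have hcc := Finset.card_insert_of_notMem hgT
          rw [hcon] at hcc
          omega
    · intro T hT
      by_cases hgT : c (wsel (Bset T)) ∈ T
      · simp only [hgT, if_true]
        exact (((hkey T hT).1) hgT).1
      · simp only [hgT, if_false]
        exact (((hkey T hT).2) hgT).1
    · intro T hT
      by_cases hgT : c (wsel (Bset T)) ∈ T
      · simp only [hgT, if_true]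
        have hBeq := (((hkey T hT).1) hgT).2
        simp only [hBeq]
        simp only [Finset.notMem_erase, if_false, Finset.insert_erase hgT]
      · simp only [hgT, if_false]
        have hBeq := (((hkey T hT).2) hgT).2
        simp only [hBeq]
        have hcond : c (wsel (Bset T)) ∈ insert (c (wsel (Bset T))) T :=
          Finset.mem_insert_self (c (wsel (Bset T))) T
        simp only [hcond, if_true, Finset.erase_insert hgT]
  rw [hzero, add_zero, hT0card]
  have h2 : n + 1 = (n - 1) + 2 := by
    have := a.pos
    omega
  rw [h2, pow_add]
  norm_num



set_option maxHeartbeats 1000000 in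
lemma sum_alpha_sc {G : DG n k} {E : Finset (Fin k)} {a b0 : Fin n} (hne0 : a ≠ b0)
    (hE : StronglyConnected G E) :
    ∑ T ∈ E.powerset, DG.alpha G T = (-1) ^ (n + 1) := by
  have h0 : ∑ T ∈ E.powerset, DG.alpha G T
      = ∑ T ∈ E.powerset.filter (fun T => Acyclic G T), ((-1 : ℤ)) ^ T.card := by
    rw [Finset.sum_filter]
    rfl
  rw [h0, ← Finset.sum_filter_add_sum_filter_not (E.powerset.filter (fun T => Acyclic G T))
    (fun T => reachSet G T a = univ), Finset.filter_filter, Finset.filter_filter]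
  have hz : ∑ T ∈ E.powerset.filter (fun T => Acyclic G T ∧ ¬ reachSet G T a = univ),
      ((-1 : ℤ)) ^ T.card = 0 := by
    have hz' := sum_unreach_zero (a := a) hE (fun R => ¬ R = univ) (fun R h => h)
    convert hz' using 3
  rw [hz, add_zero]
  have hcong : E.powerset.filter (fun T => Acyclic G T ∧ reachSet G T a = univ)
      = E.powerset.filter (fun T => Acyclic G T ∧ (∀ f ∈ T, (G f).2 ≠ a) ∧
        (∀ v, v ≠ a → ∃ f ∈ T, (G f).2 = v)) := by
    apply Finset.filter_congr
    intro T _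
    constructor
    · rintro ⟨hA, hR⟩; exact ⟨hA, (reach_univ_iff hA).mp hR⟩
    · rintro ⟨hA, hC⟩; exact ⟨hA, (reach_univ_iff hA).mpr hC⟩
  rw [hcong]
  exact sum_M_eq hne0 hE

lemma step_update_eq {G : DG n k} {e : Fin k} {p : Fin n × Fin n} {S : Finset (Fin k)}
    (he : e ∉ S) : step (Function.update G e p) S = step G S := by
  funext x y
  apply propext
  constructor <;> rintro ⟨f, hf, hfe⟩ <;> refine ⟨f, hf, ?_⟩
  · rwa [Function.update_of_ne (fun h : f = e => he (h ▸ hf)) _ _] at hfe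
  · rwa [Function.update_of_ne (fun h : f = e => he (h ▸ hf)) _ _]

lemma alpha_update_eq {G : DG n k} {e : Fin k} {p : Fin n × Fin n} {S : Finset (Fin k)}
    (he : e ∉ S) : DG.alpha (Function.update G e p) S = DG.alpha G S := by
  rw [DG.alpha, DG.alpha, DG.Acyclic, DG.Acyclic, step_update_eq he]

lemma acyclic_insert_iff {G : DG n k} {e : Fin k} {T : Finset (Fin k)} :
    Acyclic G (insert e T) ↔ (Acyclic G T ∧ ¬ ReflTransGen (step G T) (G e).2 (G e).1) := by
  constructor
  · intro hA
    refine ⟨acyclic_mono (Finset.subset_insert _ _) hA, fun hcon => ?_⟩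
    apply hA (G e).2
    have h1 : ReflTransGen (step G (insert e T)) (G e).2 (G e).1 :=
      rtg_mono (Finset.subset_insert _ _) hcon
    have h2 : step G (insert e T) (G e).1 (G e).2 := ⟨e, Finset.mem_insert_self _ _, rfl⟩
    exact Relation.TransGen.tail' h1 h2
  · rintro ⟨hA, hno⟩; exact acyclic_insert hA hno

lemma sum_split {k : ℕ} (e : Fin k) (F : Finset (Fin k) → ℤ) :
    (∑ S : Finset (Fin k), F S) =
      (∑ T ∈ (univ.erase e).powerset, F T) +
      (∑ T ∈ (univ.erase e).powerset, F (insert e T)) := by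
  have h1 : (univ : Finset (Fin k)) = insert e (univ.erase e) :=
    (Finset.insert_erase (Finset.mem_univ e)).symm
  calc (∑ S : Finset (Fin k), F S) = ∑ S ∈ (univ : Finset (Fin k)).powerset, F S := by
        rw [Finset.powerset_univ]
  _ = ∑ S ∈ (insert e ((univ : Finset (Fin k)).erase e)).powerset, F S := by rw [← h1]
  _ = _ := Finset.sum_powerset_insert (Finset.notMem_erase e univ) F

lemma beta0_univ_eq_one {G : DG n k} (hn : 1 ≤ n) (hG : StronglyConnected G univ) :
    beta0 G univ = 1 := by
  have hq : ∀ x y : Fin n, Quot.mk (adj G univ) x = Quot.mk (adj G univ) y := by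
    intro x y
    have h := hG x y
    induction h with
    | refl => rfl
    | @tail b c hab hbc ih =>
      obtain ⟨f, hf, hfe⟩ := hbc
      exact ih.trans (Quot.sound ⟨f, hf, Or.inl hfe⟩)
  rw [DG.beta0, Nat.card_eq_one_iff_unique]
  constructor
  · refine ⟨fun q1 q2 => ?_⟩
    induction q1 using Quot.ind with | _ x => ?_
    induction q2 using Quot.ind with | _ y => ?_
    exact hq x y
  · exact ⟨Quot.mk _ ⟨0, hn⟩⟩

lemma sigma_univ_sc {G : DG n k} (hn : 1 ≤ n) (hG : StronglyConnected G univ) :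
    DG.sigma G univ = (-1) ^ (k + n + 1) := by
  have hssc : SSC G univ := fun f _ => hG _ _
  rw [DG.sigma, if_pos hssc, beta0_univ_eq_one hn hG, Finset.card_univ, Fintype.card_fin]

end Aux

/-- edge-reversal lemma. Let `G` be strongly connected and let `e = [ab]`
with `a ≠ b` be an edge whose deletion leaves `G` strongly connected.  With `G_e^∨` the
graph `G` with the edge `e` reversed:
`∑_{H⊆G} α(H) + ∑_{H⊆G_e^∨} α(H) = 2·(−1)^k·σ(G)`; moreover `σ(G_e^∨) = σ(G)`, and
consequently `∑_{H⊆G} α(H) = (−1)^k σ(G)` iff `∑_{H⊆G_e^∨} α(H) = (−1)^k σ(G_e^∨)`. -/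
theorem edge_reversal (n k : ℕ) (hn : 1 ≤ n) (G : DG n k) (e : Fin k)
    (hab : (G e).1 ≠ (G e).2)
    (hG : DG.StronglyConnected G Finset.univ)
    (hGe : DG.StronglyConnected G (Finset.univ.erase e)) :
    ((∑ S : Finset (Fin k), DG.alpha G S)
        + (∑ S : Finset (Fin k), DG.alpha (Function.update G e ((G e).2, (G e).1)) S)
      = 2 * (-1) ^ k * DG.sigma G Finset.univ)
    ∧ DG.sigma (Function.update G e ((G e).2, (G e).1)) Finset.univ
        = DG.sigma G Finset.univ
    ∧ ((∑ S : Finset (Fin k), DG.alpha G S) = (-1) ^ k * DG.sigma G Finset.univ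
        ↔ (∑ S : Finset (Fin k), DG.alpha (Function.update G e ((G e).2, (G e).1)) S)
            = (-1) ^ k
              * DG.sigma (Function.update G e ((G e).2, (G e).1)) Finset.univ) := by
  set G' := Function.update G e ((G e).2, (G e).1) with hG'def
  have hG'e : G' e = ((G e).2, (G e).1) := Function.update_self _ _ _
  have hG'f : ∀ f, f ≠ e → G' f = G f := fun f hf => Function.update_of_ne hf _ _
  have hGe' : DG.StronglyConnected G' (Finset.univ.erase e) := by
    intro x y
    refine Relation.ReflTransGen.mono ?_ _ _ (hGe x y)
    rintro u v ⟨f, hf, hfe⟩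
    exact ⟨f, hf, by rw [hG'f f (Finset.mem_erase.mp hf).1]; exact hfe⟩
  have hG'univ : DG.StronglyConnected G' Finset.univ := fun x y =>
    rtg_mono (Finset.subset_univ _) (hGe' x y)
  have hsig : DG.sigma G Finset.univ = (-1 : ℤ) ^ (k + n + 1) := sigma_univ_sc hn hG
  have hsig' : DG.sigma G' Finset.univ = (-1 : ℤ) ^ (k + n + 1) := sigma_univ_sc hn hG'univ
  have hsigEq : DG.sigma G' Finset.univ = DG.sigma G Finset.univ := by rw [hsig, hsig']
  have heE' : e ∉ (Finset.univ : Finset (Fin k)).erase e := Finset.notMem_erase e Finset.univ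
  have hbase : ∑ T ∈ ((Finset.univ : Finset (Fin k)).erase e).powerset, DG.alpha G T
      = (-1) ^ (n + 1) := sum_alpha_sc hab hGe
  have hbase' : ∑ T ∈ ((Finset.univ : Finset (Fin k)).erase e).powerset, DG.alpha G' T
      = ∑ T ∈ ((Finset.univ : Finset (Fin k)).erase e).powerset, DG.alpha G T := by
    apply Finset.sum_congr rfl
    intro T hT
    have heT : e ∉ T := fun h => heE' (Finset.mem_powerset.mp hT h)
    exact alpha_update_eq heT
  have hinsG : ∑ T ∈ ((Finset.univ : Finset (Fin k)).erase e).powerset,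
      DG.alpha G (insert e T) = 0 := by
    have hstep : ∀ T ∈ ((Finset.univ : Finset (Fin k)).erase e).powerset,
        DG.alpha G (insert e T)
        = (-1) * (if (DG.Acyclic G T ∧
            ¬ Relation.ReflTransGen (DG.step G T) (G e).2 (G e).1)
            then ((-1 : ℤ)) ^ T.card else 0) := by
      intro T hT
      have heT : e ∉ T := fun h => heE' (Finset.mem_powerset.mp hT h)
      rw [DG.alpha, Finset.card_insert_of_notMem heT]
      by_cases hA : DG.Acyclic G (insert e T)
      · rw [if_pos hA, if_pos (acyclic_insert_iff.mp hA), pow_succ]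
        ring
      · rw [if_neg hA, if_neg (fun hc => hA (acyclic_insert_iff.mpr hc))]
        ring
    rw [Finset.sum_congr rfl hstep, ← Finset.mul_sum]
    have hz : ∑ T ∈ ((Finset.univ : Finset (Fin k)).erase e).powerset,
        (if (DG.Acyclic G T ∧ ¬ Relation.ReflTransGen (DG.step G T) (G e).2 (G e).1)
        then ((-1 : ℤ)) ^ T.card else 0) = 0 := by
      rw [← Finset.sum_filter]
      have hz' := sum_unreach_zero (a := (G e).2) hGe (fun R => (G e).1 ∉ R)
        (fun R hR hc => hR (by rw [hc]; exact Finset.mem_univ _))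
      have hcong : (((Finset.univ : Finset (Fin k)).erase e).powerset).filter
            (fun T => DG.Acyclic G T ∧
              ¬ Relation.ReflTransGen (DG.step G T) (G e).2 (G e).1)
          = (((Finset.univ : Finset (Fin k)).erase e).powerset).filter
            (fun T => DG.Acyclic G T ∧ (G e).1 ∉ reachSet G T (G e).2) := by
        apply Finset.filter_congr
        intro T _
        constructor
        · rintro ⟨h1, h2⟩; exact ⟨h1, fun hm => h2 (mem_reachSet.mp hm)⟩
        · rintro ⟨h1, h2⟩; exact ⟨h1, fun hr => h2 (mem_reachSet.mpr hr)⟩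
      rw [hcong]
      convert hz' using 3
    rw [hz, mul_zero]
  have hinsG' : ∑ T ∈ ((Finset.univ : Finset (Fin k)).erase e).powerset,
      DG.alpha G' (insert e T) = 0 := by
    have hstep : ∀ T ∈ ((Finset.univ : Finset (Fin k)).erase e).powerset,
        DG.alpha G' (insert e T)
        = (-1) * (if (DG.Acyclic G T ∧
            ¬ Relation.ReflTransGen (DG.step G T) (G e).1 (G e).2)
            then ((-1 : ℤ)) ^ T.card else 0) := by
      intro T hT
      have heT : e ∉ T := fun h => heE' (Finset.mem_powerset.mp hT h)
      have e1 : DG.step G' T = DG.step G T := step_update_eq heT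
      have e2 : DG.Acyclic G' T = DG.Acyclic G T := by
        rw [DG.Acyclic, DG.Acyclic, e1]
      have e3 : (G' e).1 = (G e).2 := by rw [hG'e]
      have e4 : (G' e).2 = (G e).1 := by rw [hG'e]
      have hAiff : DG.Acyclic G' (insert e T) ↔ (DG.Acyclic G T ∧
          ¬ Relation.ReflTransGen (DG.step G T) (G e).1 (G e).2) := by
        rw [acyclic_insert_iff (G := G'), e2, e4, e3, e1]
      rw [DG.alpha, Finset.card_insert_of_notMem heT]
      by_cases hA : DG.Acyclic G' (insert e T)
      · rw [if_pos hA, if_pos (hAiff.mp hA), pow_succ]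
        ring
      · rw [if_neg hA, if_neg (fun hc => hA (hAiff.mpr hc))]
        ring
    rw [Finset.sum_congr rfl hstep, ← Finset.mul_sum]
    have hz : ∑ T ∈ ((Finset.univ : Finset (Fin k)).erase e).powerset,
        (if (DG.Acyclic G T ∧ ¬ Relation.ReflTransGen (DG.step G T) (G e).1 (G e).2)
        then ((-1 : ℤ)) ^ T.card else 0) = 0 := by
      rw [← Finset.sum_filter]
      have hz' := sum_unreach_zero (a := (G e).1) hGe (fun R => (G e).2 ∉ R)
        (fun R hR hc => hR (by rw [hc]; exact Finset.mem_univ _))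
      have hcong : (((Finset.univ : Finset (Fin k)).erase e).powerset).filter
            (fun T => DG.Acyclic G T ∧
              ¬ Relation.ReflTransGen (DG.step G T) (G e).1 (G e).2)
          = (((Finset.univ : Finset (Fin k)).erase e).powerset).filter
            (fun T => DG.Acyclic G T ∧ (G e).2 ∉ reachSet G T (G e).1) := by
        apply Finset.filter_congr
        intro T _
        constructor
        · rintro ⟨h1, h2⟩; exact ⟨h1, fun hm => h2 (mem_reachSet.mp hm)⟩
        · rintro ⟨h1, h2⟩; exact ⟨h1, fun hr => h2 (mem_reachSet.mpr hr)⟩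
      rw [hcong]
      convert hz' using 3
    rw [hz, mul_zero]
  have h1 : (∑ S : Finset (Fin k), DG.alpha G S) = (-1) ^ (n + 1) := by
    rw [sum_split e (DG.alpha G), hbase, hinsG, add_zero]
  have h1' : (∑ S : Finset (Fin k), DG.alpha G' S) = (-1) ^ (n + 1) := by
    rw [sum_split e (DG.alpha G'), hbase', hbase, hinsG', add_zero]
  refine ⟨?_, hsigEq, ?_⟩
  · rw [h1, h1', hsig]
    have hkk : (-1 : ℤ) ^ k * (-1) ^ k = 1 := by
      rw [← pow_add, ← two_mul, pow_mul]
      norm_num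
    have hsp : (-1 : ℤ) ^ (k + n + 1) = (-1) ^ k * (-1) ^ (n + 1) := by
      rw [add_assoc, pow_add]
    rw [hsp, show (2 : ℤ) * (-1) ^ k * ((-1) ^ k * (-1) ^ (n + 1))
      = 2 * ((-1) ^ k * (-1) ^ k) * (-1) ^ (n + 1) from by ring, hkk]
    ring
  · rw [h1, h1', hsigEq]
end
end
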